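/- arXiv:0911.0859 — 6 statements merged into one kernel-verified Lean document; each statement's English description precedes it below -/
import Mathlib

section
/- Let K[X] be a polynomial ring, I an ideal, O a finite set of monomials, and G ⊆ I a set of polynomials such that the K-vector space span of G together with the span of O is closed under multiplication by each variable x_i and contains 1. Then the ideal generated by G plus the span of O equals all of K[X], and consequently if K[X] = I ⊕ ⟨O⟩ as vector spaces with G ⊆ I, then the ideal generated by G equals I. -/
open MvPolynomial

/-- If the ideal generated by `G` together with the span of the monomial set `O`
is closed under multiplication by all variables and contains `1`, then it is all
of `K[X]`; consequently, if moreover `K[X] = I ⊕ ⟨O⟩` with `G ⊆ I`, then the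
ideal generated by `G` is `I`. -/
theorem stmt_2 {K : Type*} [Field K] (n : ℕ)
    (I : Ideal (MvPolynomial (Fin n) K))
    (O : Finset (Fin n →₀ ℕ)) (G : Set (MvPolynomial (Fin n) K))
    (hGI : G ⊆ (I : Set (MvPolynomial (Fin n) K)))
    (OSpan : Submodule K (MvPolynomial (Fin n) K))
    (hOSpan : OSpan =
      Submodule.span K ((fun m => (monomial m (1 : K))) '' (O : Set (Fin n →₀ ℕ))))
    (V : Submodule K (MvPolynomial (Fin n) K))
    (hV : V = (Ideal.span G).restrictScalars K ⊔ OSpan)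
    (hmul : ∀ i : Fin n, ∀ v ∈ V, X i * v ∈ V)
    (hone : (1 : MvPolynomial (Fin n) K) ∈ V) :
    V = ⊤ ∧
      ((I.restrictScalars K ⊓ OSpan = ⊥ ∧ I.restrictScalars K ⊔ OSpan = ⊤) →
        Ideal.span G = I) := by
  have hVtop : V = ⊤ := by
    rw [eq_top_iff]
    intro p _
    induction p using MvPolynomial.induction_on with
    | C a =>
      have : (C a : MvPolynomial (Fin n) K) = a • 1 := by
        simp [Algebra.smul_def, algebraMap_eq]
      rw [this]
      exact V.smul_mem a hone
    | add p q hp hq => exact V.add_mem (hp trivial) (hq trivial)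
    | mul_X p i hp =>
      rw [mul_comm]
      exact hmul i p (hp trivial)
  refine ⟨hVtop, fun ⟨hinf, hsup⟩ => ?_⟩
  have hle : (Ideal.span G).restrictScalars K ≤ I.restrictScalars K := by
    intro x hx
    exact Ideal.span_le.mpr hGI hx
  have key : (Ideal.span G).restrictScalars K = I.restrictScalars K := by
    have h1 : (Ideal.span G).restrictScalars K ⊔ OSpan = ⊤ := by rw [← hV, hVtop]
    calc (Ideal.span G).restrictScalars K
        = (Ideal.span G).restrictScalars K ⊔ (OSpan ⊓ I.restrictScalars K) := by
          rw [inf_comm (a := OSpan), hinf, sup_bot_eq]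
      _ = ((Ideal.span G).restrictScalars K ⊔ OSpan) ⊓ I.restrictScalars K :=
          (sup_inf_assoc_of_le _ hle).symm
      _ = I.restrictScalars K := by rw [h1, top_inf_eq]
  exact Submodule.restrictScalars_injective K _ _ key
end

section
/- Let Ĩ ⊆ ⟨T^n_{≤d}⟩ be a subspace with Ĩ⁺ ∩ ⟨T^n_{≤d}⟩ = Ĩ and Ĩ + ⟨T^n_{≤d−1}⟩ = ⟨T^n_{≤d}⟩. Then the ideal generated by Ĩ intersected with the span of monomials of degree at most d equals Ĩ: (Ĩ) ∩ ⟨T^n_{≤d}⟩ = Ĩ. -/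
set_option synthInstance.maxHeartbeats 1000000
set_option maxHeartbeats 1000000

open MvPolynomial

/-- Neighborhood extension `V⁺ = V + x_1 V + ⋯ + x_n V` of a subspace. -/
noncomputable def nbhdExt {K : Type*} [Field K] {n : ℕ}
    (V : Submodule K (MvPolynomial (Fin n) K)) : Submodule K (MvPolynomial (Fin n) K) :=
  V ⊔ ⨆ i : Fin n, Submodule.map (LinearMap.mulLeft K (X i)) V

section Aux

variable {K : Type*} [Field K] {n : ℕ}

lemma aux_mul_mem_nbhdExt (V : Submodule K (MvPolynomial (Fin n) K)) (i : Fin n)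
    {t : MvPolynomial (Fin n) K} (ht : t ∈ V) : X i * t ∈ nbhdExt V := by
  refine Submodule.mem_sup_right ?_
  refine Submodule.mem_iSup_of_mem i ?_
  exact ⟨t, ht, rfl⟩

lemma aux_X_mul_mem_restrict {e : ℕ} (i : Fin n) {r : MvPolynomial (Fin n) K}
    (hr : r ∈ restrictTotalDegree (Fin n) K e) :
    X i * r ∈ restrictTotalDegree (Fin n) K (e + 1) := by
  rw [mem_restrictTotalDegree] at hr ⊢
  calc (X i * r).totalDegree ≤ (X i).totalDegree + r.totalDegree := totalDegree_mul _ _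
    _ ≤ 1 + e := by rw [totalDegree_X]; omega
    _ = e + 1 := by omega

lemma aux_eq_C_of_totalDegree_eq_zero {q : MvPolynomial (Fin n) K}
    (hq : q.totalDegree = 0) : q = C (q.coeff 0) := by
  ext m
  by_cases hm : m = 0
  · subst hm; simp
  · rw [coeff_C, if_neg (fun h => hm h.symm)]
    by_contra hc
    have hms : m ∈ q.support := by
      rw [MvPolynomial.mem_support_iff]; exact hc
    have := (totalDegree_eq_zero_iff (Fin n) q).mp hq m hms
    exact hm (Finsupp.ext this)

/-- Main case: `d = e + 1`. -/
theorem aux_main (e : ℕ) (Itil : Submodule K (MvPolynomial (Fin n) K))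
    (hsub : Itil ≤ restrictTotalDegree (Fin n) K (e + 1))
    (hstab : nbhdExt Itil ⊓ restrictTotalDegree (Fin n) K (e + 1) = Itil)
    (hfull : Itil ⊔ restrictTotalDegree (Fin n) K e =
      restrictTotalDegree (Fin n) K (e + 1)) :
    (Ideal.span (Itil : Set (MvPolynomial (Fin n) K))).restrictScalars K ⊓
        restrictTotalDegree (Fin n) K (e + 1) = Itil := by
  classical
  set R := MvPolynomial (Fin n) K
  set Re : Submodule K R := restrictTotalDegree (Fin n) K e with hRe
  set Rd : Submodule K R := restrictTotalDegree (Fin n) K (e + 1) with hRd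
  set π : R →ₗ[K] R ⧸ Itil := Itil.mkQ with hπ
  have hker : ∀ f : R, π f = 0 ↔ f ∈ Itil := fun f => by
    rw [hπ, Submodule.mkQ_apply, Submodule.Quotient.mk_eq_zero]
  -- the key stabilization consequence
  have key0 : ∀ (i : Fin n) (t : R), t ∈ Itil → t ∈ Re → X i * t ∈ Itil := by
    intro i t h1 h2
    rw [← hstab]
    exact ⟨aux_mul_mem_nbhdExt Itil i h1, aux_X_mul_mem_restrict i h2⟩
  -- decomposition via hfull
  have hdec : ∀ f ∈ Rd, ∃ h ∈ Itil, ∃ r ∈ Re, f = h + r := by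
    intro f hf
    obtain ⟨h, hh, r, hr, hhr⟩ := Submodule.mem_sup.mp (hfull.ge hf)
    exact ⟨h, hh, r, hr, hhr.symm⟩
  set ρ0 : Re →ₗ[K] R ⧸ Itil := π ∘ₗ Re.subtype with hρ0
  set S : Submodule K (R ⧸ Itil) := LinearMap.range ρ0 with hS
  have hπS : ∀ r ∈ Re, π r ∈ S := fun r hr => ⟨⟨r, hr⟩, rfl⟩
  have hπSd : ∀ f ∈ Rd, π f ∈ S := by
    intro f hf
    obtain ⟨h, hh, r, hr, rfl⟩ := hdec f hf
    have : π (h + r) = π r := by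
      rw [map_add]
      rw [show π h = 0 from (hker h).mpr hh, zero_add]
    rw [this]; exact hπS r hr
  obtain ⟨g, hg⟩ := ρ0.rangeRestrict.exists_rightInverse_of_surjective ρ0.range_rangeRestrict
  have hgv : ∀ s : S, π ((g s : Re) : R) = ↑s := by
    intro s
    have := LinearMap.congr_fun hg s
    have := congrArg Subtype.val this
    simpa [hρ0] using this
  -- the multiplication operators on S
  set ν : Fin n → (S →ₗ[K] R ⧸ Itil) := fun i =>
    π ∘ₗ (LinearMap.mulLeft K (X i)) ∘ₗ Re.subtype ∘ₗ g with hν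
  have hνval : ∀ i (s : S), ν i s = π (X i * ((g s : Re) : R)) := fun i s => rfl
  have hνS : ∀ i (s : S), ν i s ∈ S := by
    intro i s
    rw [hνval]
    exact hπSd _ (aux_X_mul_mem_restrict i (g s).2)
  set μ : Fin n → (S →ₗ[K] S) := fun i => (ν i).codRestrict S (hνS i) with hμ
  have hμval : ∀ i (s : S), (μ i s : R ⧸ Itil) = π (X i * ((g s : Re) : R)) := fun i s => rfl
  -- Key 1
  have key1 : ∀ (i : Fin n) (r : R) (hr : r ∈ Re),
      (μ i ⟨π r, hπS r hr⟩ : R ⧸ Itil) = π (X i * r) := by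
    intro i r hr
    rw [hμval]
    set s : S := ⟨π r, hπS r hr⟩
    have hgr : π (((g s : Re) : R) - r) = 0 := by
      rw [map_sub, hgv]
      exact sub_eq_zero_of_eq rfl
    have hgm : (((g s : Re) : R) - r) ∈ Itil := (hker _).mp hgr
    have hge : (((g s : Re) : R) - r) ∈ Re := sub_mem (g s).2 hr
    have := key0 i _ hgm hge
    have hπ0 : π (X i * (((g s : Re) : R) - r)) = 0 := (hker _).mpr this
    rw [mul_sub, map_sub, sub_eq_zero] at hπ0
    exact hπ0
  -- every element of S has the form ⟨π r, _⟩ with r ∈ Re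
  have hSrep : ∀ s : S, ∃ r : R, ∃ hr : r ∈ Re, s = ⟨π r, hπS r hr⟩ := by
    intro s
    obtain ⟨⟨r, hr⟩, hrs⟩ := s.2
    refine ⟨r, hr, Subtype.ext ?_⟩
    rw [← hrs]; rfl
  -- Key 2 : commutativity
  have key2 : ∀ (i j : Fin n) (s : S), μ i (μ j s) = μ j (μ i s) := by
    intro i j s
    obtain ⟨r, hr, rfl⟩ := hSrep s
    obtain ⟨h, hh, r', hr', hre⟩ := hdec (X j * r) (aux_X_mul_mem_restrict j hr)
    obtain ⟨h'', hh'', r'', hr'', hre''⟩ := hdec (X i * r) (aux_X_mul_mem_restrict i hr)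
    have h1 : μ j ⟨π r, hπS r hr⟩ = ⟨π r', hπS r' hr'⟩ := Subtype.ext (by
      rw [key1 j r hr, hre, map_add, show π h = 0 from (hker h).mpr hh, zero_add])
    have h2 : μ i ⟨π r, hπS r hr⟩ = ⟨π r'', hπS r'' hr''⟩ := Subtype.ext (by
      rw [key1 i r hr, hre'', map_add, show π h'' = 0 from (hker h'').mpr hh'', zero_add])
    rw [h1, h2]
    apply Subtype.ext
    rw [key1 i r' hr', key1 j r'' hr'']
    have hdiff : X i * r' - X j * r'' = X j * h'' - X i * h := by
      linear_combination (X j) * hre'' - (X i) * hre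
    have hmem : X i * r' - X j * r'' ∈ Itil := by
      rw [← hstab]
      constructor
      · rw [hdiff]
        exact sub_mem (aux_mul_mem_nbhdExt Itil j hh'') (aux_mul_mem_nbhdExt Itil i hh)
      · exact sub_mem (aux_X_mul_mem_restrict i hr') (aux_X_mul_mem_restrict j hr'')
    have h0 : π (X i * r' - X j * r'') = 0 := (hker _).mpr hmem
    rw [map_sub, sub_eq_zero] at h0
    exact h0
  -- the commutative monoid of operators
  set T : Set (Module.End K S) := Set.range (fun i : Fin n => μ i) with hT
  have hcomm : ∀ a ∈ T, ∀ b ∈ T, a * b = b * a := by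
    rintro a ⟨i, rfl⟩ b ⟨j, rfl⟩
    ext s
    simp only [Module.End.mul_apply]
    exact congrArg Subtype.val (key2 i j s)
  letI : CommMonoid (Submonoid.closure T) := Submonoid.closureCommMonoidOfComm (hcomm := hcomm)
  set μhat : Fin n → Submonoid.closure T := fun i => ⟨μ i, Submonoid.subset_closure ⟨i, rfl⟩⟩
    with hμhat
  set Ψ : (Fin n →₀ ℕ) → Module.End K S := fun a =>
    ((∏ j : Fin n, μhat j ^ (a j) : Submonoid.closure T) : Module.End K S) with hΨ
  have hΨstep : ∀ (a : Fin n →₀ ℕ) (i : Fin n),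
      Ψ (a + Finsupp.single i 1) = μ i * Ψ a := by
    intro a i
    have hP : (∏ j : Fin n, μhat j ^ (((a + Finsupp.single i 1) : Fin n →₀ ℕ) j))
        = μhat i * ∏ j : Fin n, μhat j ^ (a j) := by
      have h1 : ∀ j : Fin n, μhat j ^ (((a + Finsupp.single i 1) : Fin n →₀ ℕ) j)
          = μhat j ^ (Finsupp.single i 1 j) * μhat j ^ (a j) := by
        intro j; rw [Finsupp.add_apply, add_comm (a j), pow_add]
      rw [Finset.prod_congr rfl (fun j _ => h1 j), Finset.prod_mul_distrib]
      congr 1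
      rw [Finset.prod_eq_single i (fun j _ hj => by
            rw [Finsupp.single_apply, if_neg (fun hij => hj hij.symm), pow_zero])
          (fun hni => absurd (Finset.mem_univ i) hni)]
      rw [Finsupp.single_apply, if_pos rfl, pow_one]
    have := congrArg Subtype.val hP
    simpa [hΨ] using this
  -- base point
  have h1e : (1 : R) ∈ Re := by
    rw [hRe, mem_restrictTotalDegree, totalDegree_one]; omega
  set s1 : S := ⟨π 1, hπS 1 h1e⟩ with hs1
  set Φ : R →ₗ[K] S := (basisMonomials (Fin n) K).constr ℕ (fun a => Ψ a s1) with hΦ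
  have hΦmono : ∀ a : Fin n →₀ ℕ, Φ (monomial a 1) = Ψ a s1 := by
    intro a
    have := (basisMonomials (Fin n) K).constr_basis ℕ (fun a => Ψ a s1) a
    simpa [coe_basisMonomials] using this
  -- Φ intertwines multiplication by X i with μ i
  have hΦX : ∀ (i : Fin n) (f : R), Φ (X i * f) = μ i (Φ f) := by
    intro i
    have hcompeq : Φ ∘ₗ LinearMap.mulLeft K (X i) = (μ i) ∘ₗ Φ := by
      apply (basisMonomials (Fin n) K).ext
      intro a
      simp only [LinearMap.comp_apply, LinearMap.mulLeft_apply, coe_basisMonomials]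
      have hXm : X i * monomial a (1:K) = monomial (a + Finsupp.single i 1) 1 := by
        rw [add_comm a, monomial_single_add, pow_one]
      rw [hXm, hΦmono, hΦmono, hΨstep]
      rfl
    intro f
    exact LinearMap.congr_fun hcompeq f
  -- Φ agrees with π on monomials of degree ≤ e + 1
  have hmono : ∀ (k : ℕ) (a : Fin n →₀ ℕ), (a.sum fun _ x => x) ≤ e + 1 →
      (a.sum fun _ x => x) = k → (Ψ a s1 : R ⧸ Itil) = π (monomial a 1) := by
    intro k
    induction k with
    | zero =>
      intro a h1 h2
      have ha : a = 0 := by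
        ext j
        by_cases hj : j ∈ a.support
        · rw [Finsupp.sum] at h2
          exact Finset.sum_eq_zero_iff.mp h2 j hj
        · simpa using Finsupp.notMem_support_iff.mp hj
      subst ha
      have hΨ0 : Ψ 0 s1 = s1 := by
        simp [hΨ, one_pow, OneMemClass.coe_one, Module.End.one_apply]
      rw [hΨ0]
      simp [hs1, monomial_zero']
    | succ k ih =>
      intro a h1 h2
      have hne : a.support.Nonempty := by
        rw [Finsupp.support_nonempty_iff]
        intro h0
        rw [h0, Finsupp.sum_zero_index] at h2
        omega
      obtain ⟨i, hi⟩ := hne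
      have hai : 1 ≤ a i := Nat.one_le_iff_ne_zero.mpr (Finsupp.mem_support_iff.mp hi)
      set a' : Fin n →₀ ℕ := a - Finsupp.single i 1 with ha'
      have haa : a = a' + Finsupp.single i 1 := by
        ext j
        rw [Finsupp.add_apply, ha', Finsupp.tsub_apply, Finsupp.single_apply]
        by_cases hj : i = j
        · subst hj; rw [if_pos rfl]; omega
        · rw [if_neg hj]; omega
      have hsum' : (a'.sum fun _ x => x) = k := by
        have : (a.sum fun _ x => x) = (a'.sum fun _ x => x) + 1 := by
          rw [haa, Finsupp.sum_add_index' (fun _ => rfl) (fun _ _ _ => rfl),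
            Finsupp.sum_single_index rfl]
        omega
      have hle' : (a'.sum fun _ x => x) ≤ e := by omega
      have ihv := ih a' (by omega) hsum'
      have hm' : monomial a' (1:K) ∈ Re := by
        rw [hRe, mem_restrictTotalDegree, totalDegree_monomial _ (one_ne_zero)]
        exact hle'
      have hrepr : Ψ a' s1 = ⟨π (monomial a' 1), hπS _ hm'⟩ := Subtype.ext ihv
      rw [haa, hΨstep, Module.End.mul_apply, hrepr]
      rw [key1 i _ hm']
      congr 1
      rw [add_comm a', monomial_single_add, pow_one]
  have hΦd1 : ∀ (v : Fin n →₀ ℕ) (c : K), (v.sum fun _ x => x) ≤ e + 1 →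
      (Φ (monomial v c) : R ⧸ Itil) = π (monomial v c) := by
    intro v c hv
    have hvc : monomial v c = c • monomial v (1:K) := by
      rw [smul_monomial, smul_eq_mul, mul_one]
    rw [hvc, map_smul, map_smul, Submodule.coe_smul, hΦmono,
      hmono (v.sum fun _ x => x) v hv rfl]
  have hΦd : ∀ f : R, f ∈ Rd → (Φ f : R ⧸ Itil) = π f := by
    intro f hf
    conv_lhs => rw [f.as_sum]
    conv_rhs => rw [f.as_sum]
    rw [map_sum, map_sum, AddSubmonoidClass.coe_finset_sum]
    refine Finset.sum_congr rfl ?_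
    intro v hv
    exact hΦd1 v _ (le_trans (le_totalDegree hv) ((mem_restrictTotalDegree _ _ _).mp hf))
  -- multiplicative closure of the kernel
  have hmul0 : ∀ (p f : R), Φ f = 0 → Φ (p * f) = 0 := by
    intro p
    induction p using MvPolynomial.induction_on with
    | C c =>
      intro f hf
      rw [← smul_eq_C_mul, map_smul, hf, smul_zero]
    | add p q hp hq =>
      intro f hf
      rw [add_mul, map_add, hp f hf, hq f hf, add_zero]
    | mul_X p i hp =>
      intro f hf
      have : p * X i * f = p * (X i * f) := by ring
      rw [this]
      apply hp
      rw [hΦX, hf, map_zero]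
  have hI0 : ∀ h ∈ Itil, Φ h = 0 := by
    intro h hh
    have h1 : (Φ h : R ⧸ Itil) = π h := hΦd h (hsub hh)
    have h2 : π h = 0 := (hker h).mpr hh
    exact (ZeroMemClass.coe_eq_zero).mp (h1.trans h2)
  have hspan0 : ∀ f ∈ Ideal.span (Itil : Set R), Φ f = 0 := by
    intro f hf
    induction hf using Submodule.span_induction with
    | mem x hx => exact hI0 x hx
    | zero => exact map_zero Φ
    | add x y _ _ hx hy => rw [map_add, hx, hy, add_zero]
    | smul r x _ hx => rw [smul_eq_mul]; exact hmul0 r x hx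
  -- conclusion
  apply le_antisymm
  · intro f hf
    obtain ⟨hf1, hf2⟩ := hf
    have h0 : Φ f = 0 := hspan0 f hf1
    have hπf : π f = 0 := by
      rw [← hΦd f hf2, h0]
      rfl
    exact (hker f).mp hπf
  · refine le_inf ?_ hsub
    intro x hx
    exact Ideal.subset_span hx

theorem aux_zero (Itil : Submodule K (MvPolynomial (Fin n) K))
    (hsub : Itil ≤ restrictTotalDegree (Fin n) K 0) :
    (Ideal.span (Itil : Set (MvPolynomial (Fin n) K))).restrictScalars K ⊓
        restrictTotalDegree (Fin n) K 0 = Itil := by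
  classical
  by_cases hI : Itil = ⊥
  · subst hI
    have hsp : Ideal.span ((⊥ : Submodule K (MvPolynomial (Fin n) K)) :
        Set (MvPolynomial (Fin n) K)) = ⊥ :=
      Ideal.span_eq_bot.mpr (fun x hx => by simpa using hx)
    rw [hsp]
    simp
  · obtain ⟨p, hp, hp0⟩ := (Submodule.ne_bot_iff Itil).mp hI
    have hpd : p.totalDegree = 0 :=
      Nat.le_zero.mp ((mem_restrictTotalDegree _ _ _).mp (hsub hp))
    have hpC : p = C (p.coeff 0) := aux_eq_C_of_totalDegree_eq_zero hpd
    have hc0 : p.coeff 0 ≠ 0 := by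
      intro h
      rw [h, map_zero] at hpC
      exact hp0 hpC
    set c := p.coeff 0 with hc
    have hone : (1 : MvPolynomial (Fin n) K) ∈ Itil := by
      have hmem := Itil.smul_mem c⁻¹ hp
      have h1 : c⁻¹ • p = 1 := by
        rw [smul_eq_C_mul, hpC, ← map_mul, inv_mul_cancel₀ hc0, map_one]
      rwa [h1] at hmem
    have hItop : Itil = restrictTotalDegree (Fin n) K 0 := by
      refine le_antisymm hsub ?_
      intro q hq
      have hqd : q.totalDegree = 0 :=
        Nat.le_zero.mp ((mem_restrictTotalDegree _ _ _).mp hq)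
      have : q = (q.coeff 0) • (1 : MvPolynomial (Fin n) K) := by
        rw [smul_eq_C_mul, mul_one]
        exact aux_eq_C_of_totalDegree_eq_zero hqd
      rw [this]
      exact Itil.smul_mem _ hone
    have hspan : Ideal.span (Itil : Set (MvPolynomial (Fin n) K)) = ⊤ := by
      rw [Ideal.eq_top_iff_one]
      exact Ideal.subset_span hone
    rw [hspan, Submodule.restrictScalars_top, top_inf_eq, hItop]

end Aux

/-- If `Ĩ ⊆ ⟨T^n_{≤d}⟩` is `T^n_{≤d}`-stabilized and
`Ĩ + ⟨T^n_{≤d−1}⟩ = ⟨T^n_{≤d}⟩`, then `(Ĩ) ∩ ⟨T^n_{≤d}⟩ = Ĩ`. -/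
theorem stmt_9 {K : Type*} [Field K] (n d : ℕ)
    (Itil : Submodule K (MvPolynomial (Fin n) K))
    (hsub : Itil ≤ restrictTotalDegree (Fin n) K d)
    (hstab : nbhdExt Itil ⊓ restrictTotalDegree (Fin n) K d = Itil)
    (hfull : Itil ⊔ restrictTotalDegree (Fin n) K (d - 1) =
      restrictTotalDegree (Fin n) K d) :
    (Ideal.span (Itil : Set (MvPolynomial (Fin n) K))).restrictScalars K ⊓
        restrictTotalDegree (Fin n) K d = Itil := by
  cases d with
  | zero => exact aux_zero Itil hsub
  | succ e => exact aux_main e Itil hsub hstab hfull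
end

section
/- Let I be a zero-dimensional ideal of K[X]. The map z ↦ O(z) := {m : z_m = 1} is a bijection between the integral (0/1) points of the order ideal polytope P(I) and the set of degree-compatible order ideals of I that support a border basis of I. -/
open MvPolynomial

namespace Stmt11Aux

open Submodule

variable {K : Type*} [Field K] {n : ℕ}

theorem degree_eq_sum (m : Fin n →₀ ℕ) : m.sum (fun _ e => e) = Finsupp.degree m := rfl

theorem span_monomial_eq (A : Set (Fin n →₀ ℕ)) :
    Submodule.span K ((fun m => (monomial m (1 : K))) '' A) = restrictSupport K A := by
  have h : (fun i : Fin n →₀ ℕ => AddMonoidAlgebra.single i (1 : K)) =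
      (fun m : Fin n →₀ ℕ => (monomial m (1 : K))) := funext fun m => single_eq_monomial m 1
  rw [restrictSupport, AddMonoidAlgebra.supported_eq_span_single, h]

theorem mem_restrictSupport_iff {A : Set (Fin n →₀ ℕ)} {p : MvPolynomial (Fin n) K} :
    p ∈ restrictSupport K A ↔ ∀ m : Fin n →₀ ℕ, coeff m p ≠ 0 → m ∈ A := by
  rw [restrictSupport, AddMonoidAlgebra.mem_supported]
  constructor
  · exact fun h m hm => h (MvPolynomial.mem_support_iff.mpr hm)
  · exact fun h m hm => h m (MvPolynomial.mem_support_iff.mp (Finset.mem_coe.mp hm))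

theorem finite_degSet (i : ℕ) : {m : Fin n →₀ ℕ | Finsupp.degree m = i}.Finite :=
  (Finsupp.finite_of_degree_le i).subset fun _ hm => le_of_eq hm

theorem finiteDimensional_restrictSupport {A : Set (Fin n →₀ ℕ)} (hA : A.Finite) :
    FiniteDimensional K (restrictSupport K A : Submodule K (MvPolynomial (Fin n) K)) := by
  have := hA.to_subtype
  exact Module.Finite.of_basis (basisRestrictSupport K A)

theorem finrank_restrictSupport {A : Set (Fin n →₀ ℕ)} (hA : A.Finite) :
    Module.finrank K (restrictSupport K A : Submodule K (MvPolynomial (Fin n) K)) = A.ncard := by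
  have := hA.fintype
  rw [Module.finrank_eq_card_basis (basisRestrictSupport K A), ← Set.toFinset_card,
    ← Set.ncard_eq_toFinset_card']

theorem hom_eq (i : ℕ) :
    homogeneousSubmodule (Fin n) K i = restrictSupport K {m | Finsupp.degree m = i} :=
  homogeneousSubmodule_eq_finsupp_supported (Fin n) K i

instance (i : ℕ) : FiniteDimensional K (homogeneousSubmodule (Fin n) K i) := by
  rw [hom_eq]
  exact finiteDimensional_restrictSupport (finite_degSet i)

theorem finrank_hom (i : ℕ) :
    Module.finrank K (homogeneousSubmodule (Fin n) K i) =
      {m : Fin n →₀ ℕ | Finsupp.degree m = i}.ncard := by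
  rw [hom_eq, finrank_restrictSupport (finite_degSet i)]

theorem hom_le_rtd (i : ℕ) :
    homogeneousSubmodule (Fin n) K i ≤ restrictTotalDegree (Fin n) K i := by
  rw [hom_eq]
  exact restrictSupport_mono (R := K) fun m hm => le_of_eq hm

theorem finiteDimensional_span_monomials {A : Set (Fin n →₀ ℕ)} (hA : A.Finite) :
    FiniteDimensional K (Submodule.span K ((fun m => (monomial m (1 : K))) '' A)) := by
  rw [span_monomial_eq]
  exact finiteDimensional_restrictSupport hA

theorem finrank_span_monomials {A : Set (Fin n →₀ ℕ)} (hA : A.Finite) :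
    Module.finrank K (Submodule.span K ((fun m => (monomial m (1 : K))) '' A)) = A.ncard := by
  rw [span_monomial_eq]
  exact finrank_restrictSupport hA

theorem homComponent_mem_restrictSupport {A : Set (Fin n →₀ ℕ)} {p : MvPolynomial (Fin n) K}
    (hp : p ∈ restrictSupport K A) (i : ℕ) :
    homogeneousComponent i p ∈
      restrictSupport K (A ∩ {m | Finsupp.degree m = i} : Set (Fin n →₀ ℕ)) := by
  rw [mem_restrictSupport_iff] at hp ⊢
  intro m hm
  rw [coeff_homogeneousComponent] at hm
  by_cases hd : Finsupp.degree m = i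
  · rw [if_pos hd] at hm
    exact ⟨hp m hm, hd⟩
  · rw [if_neg hd] at hm
    exact absurd rfl hm

theorem homComponent_totalDegree_ne_zero {p : MvPolynomial (Fin n) K} (hp : p ≠ 0) :
    homogeneousComponent p.totalDegree p ≠ 0 := by
  obtain ⟨m, hm, hdeg⟩ := Finset.exists_mem_eq_sup p.support
    (MvPolynomial.support_nonempty.mpr hp) (fun m => Finsupp.degree m)
  have h1 : Finsupp.degree m = p.totalDegree := hdeg.symm
  intro h
  have h2 := coeff_homogeneousComponent (σ := Fin n) (R := K) p.totalDegree p m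
  rw [h, if_pos h1] at h2
  exact (MvPolynomial.mem_support_iff.mp hm) h2.symm

section WithIdeal

variable (I : Ideal (MvPolynomial (Fin n) K))

/-- The space of degree-`i` leading forms of elements of `I` of degree at most `i`. -/
noncomputable def Wd (i : ℕ) : Submodule K (MvPolynomial (Fin n) K) :=
  Submodule.map (homogeneousComponent i) (I.restrictScalars K ⊓ restrictTotalDegree (Fin n) K i)

theorem Wd_le_hom (i : ℕ) : Wd I i ≤ homogeneousSubmodule (Fin n) K i := by
  rintro _ ⟨f, -, rfl⟩
  exact homogeneousComponent_mem i f

instance (i : ℕ) : FiniteDimensional K (Wd I i) :=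
  Submodule.finiteDimensional_of_le (Wd_le_hom I i)

theorem homComponent_mem_span {O : Set (Fin n →₀ ℕ)} {f : MvPolynomial (Fin n) K}
    (hf : f ∈ Submodule.span K ((fun m => (monomial m (1 : K))) '' O)) (i : ℕ) :
    homogeneousComponent i f ∈
      Submodule.span K ((fun m => (monomial m (1 : K))) ''
        {m ∈ O | Finsupp.degree m = i}) := by
  rw [span_monomial_eq] at hf ⊢
  exact homComponent_mem_restrictSupport hf i

theorem span_sep_le_hom (O : Set (Fin n →₀ ℕ)) (i : ℕ) :
    Submodule.span K ((fun m => (monomial m (1 : K))) '' {m ∈ O | Finsupp.degree m = i}) ≤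
      homogeneousSubmodule (Fin n) K i := by
  rw [span_monomial_eq, hom_eq]
  exact restrictSupport_mono (R := K) fun m hm => hm.2

/-- Zero-dimensionality: `Wd I i` is eventually the full space of homogeneous forms. -/
theorem exists_stab [FiniteDimensional K (MvPolynomial (Fin n) K ⧸ I)] :
    ∃ D : ℕ, ∀ i : ℕ, D < i → Wd I i = homogeneousSubmodule (Fin n) K i := by
  set q := (Ideal.Quotient.mkₐ K I).toLinearMap with hq
  set Q : ℕ → Submodule K (MvPolynomial (Fin n) K ⧸ I) :=
    fun j => Submodule.map q (restrictTotalDegree (Fin n) K j) with hQ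
  have hQmono : ∀ {a b : ℕ}, a ≤ b → Q a ≤ Q b := by
    intro a b hab
    exact Submodule.map_mono (restrictSupport_mono (R := K) fun m hm => le_trans hm hab)
  obtain ⟨D, hD⟩ : ∃ D : ℕ, ∀ j : ℕ, Module.finrank K (Q j) ≤ Module.finrank K (Q D) := by
    have hb : BddAbove (Set.range fun j => Module.finrank K (Q j)) :=
      ⟨Module.finrank K (MvPolynomial (Fin n) K ⧸ I), by
        rintro _ ⟨j, rfl⟩; exact Submodule.finrank_le _⟩
    obtain ⟨D, hD⟩ := Nat.sSup_mem (Set.range_nonempty _) hb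
    exact ⟨D, fun j => le_trans (le_csSup hb ⟨j, rfl⟩) (le_of_eq hD.symm)⟩
  refine ⟨D, fun i hi => ?_⟩
  have hQeq : Q i ≤ Q (i - 1) := by
    have h1 : Q (i - 1) ≤ Q i := hQmono (by omega)
    have h2 : Module.finrank K (Q i) ≤ Module.finrank K (Q (i - 1)) :=
      le_trans (hD i) (Submodule.finrank_mono (hQmono (by omega : D ≤ i - 1)))
    exact le_of_eq (Submodule.eq_of_le_of_finrank_le h1 h2).symm
  refine le_antisymm (Wd_le_hom I i) ?_
  intro p hp
  have hpr : p ∈ restrictTotalDegree (Fin n) K i := hom_le_rtd i hp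
  obtain ⟨r, hr, hqr⟩ := hQeq (Submodule.mem_map_of_mem hpr)
  have hIr : p - r ∈ I.restrictScalars K := by
    have : q (p - r) = 0 := by rw [map_sub, hqr, sub_self]
    rwa [hq, AlgHom.toLinearMap_apply, Ideal.Quotient.mkₐ_eq_mk,
      Ideal.Quotient.eq_zero_iff_mem] at this
  have hrd : r ∈ restrictTotalDegree (Fin n) K i :=
    restrictSupport_mono (R := K) (fun m hm => le_trans hm (by omega : i - 1 ≤ i)) hr
  refine ⟨p - r, ⟨hIr, Submodule.sub_mem _ hpr hrd⟩, ?_⟩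
  rw [map_sub, homogeneousComponent_of_mem hp, if_pos rfl,
    homogeneousComponent_eq_zero, sub_zero]
  have := (mem_restrictTotalDegree (Fin n) (i - 1) r).mp hr
  omega

theorem mem_rtd_of_homComponent_zero {d : ℕ} {p : MvPolynomial (Fin n) K}
    (hp : p ∈ restrictTotalDegree (Fin n) K (d + 1))
    (h0 : homogeneousComponent (d + 1) p = 0) :
    p ∈ restrictTotalDegree (Fin n) K d := by
  rw [restrictTotalDegree] at hp ⊢
  rw [mem_restrictSupport_iff] at hp ⊢
  intro m hm
  have h1 := hp m hm
  have h2 := coeff_homogeneousComponent (σ := Fin n) (R := K) (d + 1) p m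
  rw [h0] at h2
  by_cases hd : Finsupp.degree m = d + 1
  · rw [if_pos hd] at h2
    exact absurd h2.symm hm
  · simp only [Set.mem_setOf_eq] at h1 ⊢
    rw [degree_eq_sum] at h1 ⊢
    omega

theorem eq_zero_of_rtd_zero {p : MvPolynomial (Fin n) K}
    (hp : p ∈ restrictTotalDegree (Fin n) K 0)
    (h0 : homogeneousComponent 0 p = 0) : p = 0 := by
  rw [restrictTotalDegree, mem_restrictSupport_iff] at hp
  ext m
  by_contra hm
  rw [MvPolynomial.coeff_zero] at hm
  have h1 := hp m hm
  simp only [Set.mem_setOf_eq] at h1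
  rw [degree_eq_sum] at h1
  have hd : Finsupp.degree m = 0 := Nat.le_zero.mp h1
  have h2 := coeff_homogeneousComponent (σ := Fin n) (R := K) 0 p m
  rw [h0, if_pos hd] at h2
  exact hm h2.symm

theorem inf_bot {O : Set (Fin n →₀ ℕ)}
    (h : ∀ i : ℕ, Submodule.span K ((fun m => (monomial m (1 : K))) ''
        {m ∈ O | Finsupp.degree m = i}) ⊓ Wd I i = ⊥) :
    I.restrictScalars K ⊓
      Submodule.span K ((fun m => (monomial m (1 : K))) '' O) = ⊥ := by
  rw [eq_bot_iff]
  rintro f hf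
  rw [Submodule.mem_inf] at hf
  obtain ⟨hfI, hfO⟩ := hf
  rw [Submodule.mem_bot]
  by_contra hf0
  have h1 : homogeneousComponent f.totalDegree f ∈ Wd I f.totalDegree :=
    ⟨f, ⟨hfI, (mem_restrictTotalDegree (Fin n) f.totalDegree f).mpr le_rfl⟩, rfl⟩
  have h2 := homComponent_mem_span hfO f.totalDegree
  have h3 : homogeneousComponent f.totalDegree f ∈ (⊥ : Submodule K (MvPolynomial (Fin n) K)) :=
    h f.totalDegree ▸ Submodule.mem_inf.mpr ⟨h2, h1⟩
  exact homComponent_totalDegree_ne_zero hf0 (Submodule.mem_bot K |>.mp h3)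

theorem sup_top {O : Set (Fin n →₀ ℕ)}
    (h : ∀ i : ℕ, Submodule.span K ((fun m => (monomial m (1 : K))) ''
        {m ∈ O | Finsupp.degree m = i}) ⊔ Wd I i = homogeneousSubmodule (Fin n) K i) :
    I.restrictScalars K ⊔
      Submodule.span K ((fun m => (monomial m (1 : K))) '' O) = ⊤ := by
  set T := I.restrictScalars K ⊔
    Submodule.span K ((fun m => (monomial m (1 : K))) '' O) with hT
  have step : ∀ d : ℕ, ∀ f ∈ restrictTotalDegree (Fin n) K d,
      ∃ f', f' ∈ restrictTotalDegree (Fin n) K d ∧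
        homogeneousComponent d f' = 0 ∧ f - f' ∈ T := by
    intro d f hf
    have hfd : homogeneousComponent d f ∈
        Submodule.span K ((fun m => (monomial m (1 : K))) ''
          {m ∈ O | Finsupp.degree m = d}) ⊔ Wd I d := by
      rw [h d]; exact homogeneousComponent_mem d f
    obtain ⟨s, hs, w, hw, hsw⟩ := Submodule.mem_sup.mp hfd
    obtain ⟨g, ⟨hgI, hgd⟩, rfl⟩ := hw
    have hshom : s ∈ homogeneousSubmodule (Fin n) K d := span_sep_le_hom O d hs
    refine ⟨f - s - g, ?_, ?_, ?_⟩
    · exact Submodule.sub_mem _ (Submodule.sub_mem _ hf (hom_le_rtd d hshom)) hgd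
    · rw [map_sub, map_sub, homogeneousComponent_of_mem hshom, if_pos rfl]
      rw [sub_sub, ← hsw]
      abel
    · have hsT : s ∈ T := by
        refine Submodule.mem_sup_right (Submodule.span_mono (Set.image_mono ?_) hs)
        exact fun m hm => hm.1
      have hgT : g ∈ T := Submodule.mem_sup_left hgI
      have : f - (f - s - g) = s + g := by ring
      rw [this]
      exact Submodule.add_mem _ hsT hgT
  have key : ∀ d : ℕ, restrictTotalDegree (Fin n) K d ≤ T := by
    intro d
    induction d with
    | zero =>
      intro f hf
      obtain ⟨f', hf', h0, hfT⟩ := step 0 f hf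
      have : f' = 0 := eq_zero_of_rtd_zero hf' h0
      rwa [this, sub_zero] at hfT
    | succ d ih =>
      intro f hf
      obtain ⟨f', hf', h0, hfT⟩ := step (d + 1) f hf
      have hf'd : f' ∈ restrictTotalDegree (Fin n) K d := mem_rtd_of_homComponent_zero hf' h0
      have : f = (f - f') + f' := by ring
      rw [this]
      exact Submodule.add_mem _ hfT (ih hf'd)
  rw [eq_top_iff]
  intro f _
  exact key f.totalDegree ((mem_restrictTotalDegree (Fin n) f.totalDegree f).mpr le_rfl)

theorem inf_bot_of_sup {S : Submodule K (MvPolynomial (Fin n) K)} {i : ℕ}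
    [FiniteDimensional K S]
    (hle : Module.finrank K S + Module.finrank K (Wd I i) ≤
      Module.finrank K (homogeneousSubmodule (Fin n) K i))
    (hsup : S ⊔ Wd I i = homogeneousSubmodule (Fin n) K i) :
    S ⊓ Wd I i = ⊥ := by
  have h1 := Submodule.finrank_sup_add_finrank_inf_eq S (Wd I i)
  rw [hsup] at h1
  have : FiniteDimensional K (S ⊓ Wd I i : Submodule K (MvPolynomial (Fin n) K)) :=
    Submodule.finiteDimensional_of_le inf_le_left
  have h2 : Module.finrank K (S ⊓ Wd I i : Submodule K (MvPolynomial (Fin n) K)) = 0 := by omega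
  exact Submodule.finrank_eq_zero.mp h2

theorem sup_hom_of_higher {O : Set (Fin n →₀ ℕ)} {i : ℕ}
    (htop : I.restrictScalars K ⊔
      Submodule.span K ((fun m => (monomial m (1 : K))) '' O) = ⊤)
    (hhigh : ∀ j : ℕ, i < j →
      Submodule.span K ((fun m => (monomial m (1 : K))) ''
        {m ∈ O | Finsupp.degree m = j}) ⊓ Wd I j = ⊥) :
    Submodule.span K ((fun m => (monomial m (1 : K))) ''
      {m ∈ O | Finsupp.degree m = i}) ⊔ Wd I i = homogeneousSubmodule (Fin n) K i := by
  refine le_antisymm (sup_le (span_sep_le_hom O i) (Wd_le_hom I i)) ?_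
  intro v hv
  have hvT : v ∈ I.restrictScalars K ⊔
      Submodule.span K ((fun m => (monomial m (1 : K))) '' O) := htop ▸ Submodule.mem_top
  obtain ⟨a, ha, b, hb, hab⟩ := Submodule.mem_sup.mp hvT
  have hdeg : a.totalDegree ≤ i := by
    by_contra hgt
    push_neg at hgt
    have ha0 : a ≠ 0 := by
      intro h0
      rw [h0, totalDegree_zero] at hgt
      omega
    have h1 : homogeneousComponent a.totalDegree a ∈ Wd I a.totalDegree :=
      ⟨a, ⟨ha, (mem_restrictTotalDegree (Fin n) a.totalDegree a).mpr le_rfl⟩, rfl⟩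
    have hvd : homogeneousComponent a.totalDegree v = 0 := by
      rw [homogeneousComponent_of_mem hv, if_neg (by omega)]
    have h2 : homogeneousComponent a.totalDegree a =
        - homogeneousComponent a.totalDegree b := by
      have := congrArg (homogeneousComponent a.totalDegree) hab
      rw [map_add, hvd] at this
      linear_combination this
    have h3 : homogeneousComponent a.totalDegree a ∈
        Submodule.span K ((fun m => (monomial m (1 : K))) ''
          {m ∈ O | Finsupp.degree m = a.totalDegree}) := by
      rw [h2]
      exact Submodule.neg_mem _ (homComponent_mem_span hb a.totalDegree)
    have h4 : homogeneousComponent a.totalDegree a ∈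
        (⊥ : Submodule K (MvPolynomial (Fin n) K)) :=
      hhigh a.totalDegree hgt ▸ Submodule.mem_inf.mpr ⟨h3, h1⟩
    exact homComponent_totalDegree_ne_zero ha0 (Submodule.mem_bot K |>.mp h4)
  have h1 : homogeneousComponent i a ∈ Wd I i :=
    ⟨a, ⟨ha, (mem_restrictTotalDegree (Fin n) i a).mpr hdeg⟩, rfl⟩
  have h2 := homComponent_mem_span hb i
  have hv2 : v = homogeneousComponent i a + homogeneousComponent i b := by
    have h3 := congrArg (homogeneousComponent i) hab
    rw [map_add, homogeneousComponent_of_mem hv, if_pos rfl] at h3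
    exact h3.symm
  rw [hv2]
  exact Submodule.add_mem _ (Submodule.mem_sup_right h1) (Submodule.mem_sup_left h2)

/-- Per-degree decomposition for a degree-compatible order ideal supporting a border basis. -/
theorem perdeg_of_bb {O : Set (Fin n →₀ ℕ)} (hfin : O.Finite)
    (hdc : ∀ i : ℕ, {m ∈ O | Finsupp.degree m = i}.ncard + Module.finrank K (Wd I i) =
      Module.finrank K (homogeneousSubmodule (Fin n) K i))
    (htop : I.restrictScalars K ⊔
      Submodule.span K ((fun m => (monomial m (1 : K))) '' O) = ⊤) :
    ∀ i : ℕ, Submodule.span K ((fun m => (monomial m (1 : K))) ''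
        {m ∈ O | Finsupp.degree m = i}) ⊓ Wd I i = ⊥ := by
  obtain ⟨D, hD⟩ : ∃ D : ℕ, ∀ m ∈ O, Finsupp.degree m ≤ D := by
    obtain ⟨D, hD⟩ := (hfin.image Finsupp.degree).bddAbove
    exact ⟨D, fun m hm => hD ⟨m, hm, rfl⟩⟩
  have hbase : ∀ j : ℕ, D < j → Submodule.span K ((fun m => (monomial m (1 : K))) ''
      {m ∈ O | Finsupp.degree m = j}) ⊓ Wd I j = ⊥ := by
    intro j hj
    have hempty : {m ∈ O | Finsupp.degree m = j} = (∅ : Set (Fin n →₀ ℕ)) := by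
      ext m
      simp only [Set.mem_setOf_eq, Set.mem_empty_iff_false, iff_false, not_and]
      intro hm
      have := hD m hm
      omega
    rw [hempty]
    simp
  have key : ∀ k : ℕ, ∀ i : ℕ, D + 1 ≤ i + k →
      Submodule.span K ((fun m => (monomial m (1 : K))) ''
        {m ∈ O | Finsupp.degree m = i}) ⊓ Wd I i = ⊥ := by
    intro k
    induction k with
    | zero => intro i hi; exact hbase i (by omega)
    | succ k ih =>
      intro i hi
      by_cases hiD : D < i
      · exact hbase i hiD
      · have hsup := sup_hom_of_higher I (i := i) htop (fun j hj => ih j (by omega))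
        have : FiniteDimensional K
            (Submodule.span K ((fun m => (monomial m (1 : K))) ''
              {m ∈ O | Finsupp.degree m = i})) :=
          finiteDimensional_span_monomials (hfin.subset fun m hm => hm.1)
        refine inf_bot_of_sup I ?_ hsup
        rw [finrank_span_monomials (hfin.subset fun m hm => hm.1)]
        have := hdc i
        omega
  exact fun i => key (D + 1) i (by omega)

end WithIdeal

theorem sum_eq_card_filter {α : Type*} [DecidableEq α] (z : α → ℤ)
    (h0 : ∀ m, z m = 0 ∨ z m = 1) (V : Finset α) [DecidablePred fun m => z m = 1] :
    ∑ m ∈ V, z m = ((V.filter fun m => z m = 1).card : ℤ) := by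
  rw [Finset.card_filter]
  push_cast
  refine Finset.sum_congr rfl fun m _ => ?_
  rcases h0 m with h | h <;> simp [h]

end Stmt11Aux

set_option maxHeartbeats 1600000 in
/-- The map `z ↦ O(z) = {m | z_m = 1}` is a bijection between the integral
(0/1) points of the order ideal polytope `P(I)` of a zero-dimensional ideal `I`
and the degree-compatible order ideals of `I` that support a border basis. -/
theorem stmt_11 {K : Type*} [Field K] (n : ℕ)
    (I : Ideal (MvPolynomial (Fin n) K))
    [FiniteDimensional K (MvPolynomial (Fin n) K ⧸ I)]
    (W : ℕ → Submodule K (MvPolynomial (Fin n) K))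
    (hW : ∀ i : ℕ, W i = Submodule.map (homogeneousComponent i)
      (I.restrictScalars K ⊓ restrictTotalDegree (Fin n) K i)) :
    Set.BijOn (fun z : (Fin n →₀ ℕ) → ℤ => {m : Fin n →₀ ℕ | z m = 1})
      -- the integral points of the order ideal polytope P(I)
      {z : (Fin n →₀ ℕ) → ℤ |
        (∀ m : Fin n →₀ ℕ, z m = 0 ∨ z m = 1) ∧
        (∀ m₁ m₂ : Fin n →₀ ℕ, (∀ i, m₁ i ≤ m₂ i) → z m₂ ≤ z m₁) ∧
        (∀ i : ℕ, (∑ᶠ m ∈ {m : Fin n →₀ ℕ | m.sum (fun _ e => e) = i}, z m) =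
          (Module.finrank K (homogeneousSubmodule (Fin n) K i) : ℤ) -
            (Module.finrank K (W i) : ℤ)) ∧
        (∀ i : ℕ, ∀ U : Finset (Fin n →₀ ℕ),
          (∀ m ∈ U, m.sum (fun _ e => e) = i) →
          U.card + Module.finrank K (W i) =
            Module.finrank K (homogeneousSubmodule (Fin n) K i) →
          (∑ m ∈ U, z m) ≤
            (Module.finrank K
              ↥(Submodule.span K ((fun m => (monomial m (1 : K))) '' (U : Set (Fin n →₀ ℕ)))
                ⊔ W i) : ℤ) - (Module.finrank K (W i) : ℤ))}
      -- the degree-compatible order ideals of I supporting a border basis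
      {O : Set (Fin n →₀ ℕ) |
        O.Finite ∧
        (∀ t ∈ O, ∀ t' : Fin n →₀ ℕ, (∀ i, t' i ≤ t i) → t' ∈ O) ∧
        (∀ i : ℕ, {m ∈ O | m.sum (fun _ e => e) = i}.ncard + Module.finrank K (W i) =
          Module.finrank K (homogeneousSubmodule (Fin n) K i)) ∧
        I.restrictScalars K ⊓
            Submodule.span K ((fun m => (monomial m (1 : K))) '' O) = ⊥ ∧
        I.restrictScalars K ⊔
            Submodule.span K ((fun m => (monomial m (1 : K))) '' O) = ⊤} := by
  classical
  obtain rfl : W = Stmt11Aux.Wd I := funext hW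
  have hWle := Stmt11Aux.Wd_le_hom I
  refine ⟨?_, ?_, ?_⟩
  · -- MapsTo
    rintro z ⟨h0, h1, h2, h3⟩
    simp only [Set.mem_setOf_eq]
    set O : Set (Fin n →₀ ℕ) := {m | z m = 1} with hO
    set Ui : ℕ → Finset (Fin n →₀ ℕ) :=
      fun i => (Stmt11Aux.finite_degSet (n := n) i).toFinset.filter (fun m => z m = 1) with hUi
    have hUiO : ∀ i : ℕ, (↑(Ui i) : Set (Fin n →₀ ℕ)) = {m ∈ O | Finsupp.degree m = i} := by
      intro i
      ext m
      simp only [hUi, Finset.coe_filter, Set.Finite.mem_toFinset, Set.mem_setOf_eq, hO]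
      exact and_comm
    have hsum : ∀ i : ℕ, (∑ᶠ m ∈ {m : Fin n →₀ ℕ | m.sum (fun _ e => e) = i}, z m) =
        ∑ m ∈ (Stmt11Aux.finite_degSet (n := n) i).toFinset, z m := fun i =>
      finsum_mem_eq_finite_toFinset_sum _ (Stmt11Aux.finite_degSet i)
    have hsum2 : ∀ i : ℕ, ∑ m ∈ (Stmt11Aux.finite_degSet (n := n) i).toFinset, z m =
        ((Ui i).card : ℤ) := fun i => Stmt11Aux.sum_eq_card_filter z h0 _
    have hfr : ∀ i : ℕ, (Ui i).card + Module.finrank K (Stmt11Aux.Wd I i) =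
        Module.finrank K (homogeneousSubmodule (Fin n) K i) := by
      intro i
      have ha := h2 i
      rw [hsum i, hsum2 i] at ha
      have hb : Module.finrank K (Stmt11Aux.Wd I i) ≤
          Module.finrank K (homogeneousSubmodule (Fin n) K i) :=
        Submodule.finrank_mono (hWle i)
      omega
    have hperdegsup : ∀ i : ℕ, Submodule.span K ((fun m => (monomial m (1 : K))) ''
        {m ∈ O | Finsupp.degree m = i}) ⊔ Stmt11Aux.Wd I i =
        homogeneousSubmodule (Fin n) K i := by
      intro i
      have hU : ∀ m ∈ Ui i, m.sum (fun _ e => e) = i := by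
        intro m hm
        have := (Finset.mem_filter.mp hm).1
        rwa [Set.Finite.mem_toFinset] at this
      have h4 := h3 i (Ui i) hU (hfr i)
      have h5 : ∑ m ∈ Ui i, z m = ((Ui i).card : ℤ) := by
        rw [Finset.sum_congr rfl (fun m hm => (Finset.mem_filter.mp hm).2)]
        simp
        rfl
      rw [h5] at h4
      have hle1 : Submodule.span K ((fun m => (monomial m (1 : K))) '' ↑(Ui i)) ⊔
          Stmt11Aux.Wd I i ≤ homogeneousSubmodule (Fin n) K i := by
        refine sup_le ?_ (hWle i)
        rw [hUiO i]
        exact Stmt11Aux.span_sep_le_hom O i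
      have hle2 : Module.finrank K (homogeneousSubmodule (Fin n) K i) ≤
          Module.finrank K ↥(Submodule.span K ((fun m => (monomial m (1 : K))) '' ↑(Ui i)) ⊔
            Stmt11Aux.Wd I i) := by
        have := hfr i
        omega
      have h6 := Submodule.eq_of_le_of_finrank_le hle1 hle2
      rw [← hUiO i]
      exact h6
    have hOfin' : ∀ i : ℕ, ({m ∈ O | Finsupp.degree m = i}).Finite := fun i =>
      (Stmt11Aux.finite_degSet i).subset fun m hm => hm.2
    have hperdeginf : ∀ i : ℕ, Submodule.span K ((fun m => (monomial m (1 : K))) ''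
        {m ∈ O | Finsupp.degree m = i}) ⊓ Stmt11Aux.Wd I i = ⊥ := by
      intro i
      have : FiniteDimensional K (Submodule.span K ((fun m => (monomial m (1 : K))) ''
          {m ∈ O | Finsupp.degree m = i})) :=
        Stmt11Aux.finiteDimensional_span_monomials (hOfin' i)
      refine Stmt11Aux.inf_bot_of_sup I ?_ (hperdegsup i)
      rw [Stmt11Aux.finrank_span_monomials (hOfin' i)]
      have h6 : {m ∈ O | Finsupp.degree m = i}.ncard = (Ui i).card := by
        rw [← hUiO i, Set.ncard_coe_finset]
      have := hfr i
      omega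
    obtain ⟨D, hD⟩ := Stmt11Aux.exists_stab I
    refine ⟨?_, ?_, ?_, Stmt11Aux.inf_bot I hperdeginf, Stmt11Aux.sup_top I hperdegsup⟩
    · -- finiteness
      refine (Finsupp.finite_of_degree_le D).subset ?_
      intro m hm
      simp only [Set.mem_setOf_eq] at hm ⊢
      by_contra hgt
      push_neg at hgt
      have h7 := hfr (Finsupp.degree m)
      have h8 : Module.finrank K (Stmt11Aux.Wd I (Finsupp.degree m)) =
          Module.finrank K (homogeneousSubmodule (Fin n) K (Finsupp.degree m)) := by
        rw [hD _ hgt]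
      have h9 : (Ui (Finsupp.degree m)).card = 0 := by omega
      have h10 : m ∈ Ui (Finsupp.degree m) :=
        Finset.mem_filter.mpr ⟨(Stmt11Aux.finite_degSet _).mem_toFinset.mpr rfl, hm⟩
      rw [Finset.card_eq_zero] at h9
      simp [h9] at h10
    · -- down-closed
      intro t ht t' ht'
      have h11 := h1 t' t ht'
      have ht2 : z t = 1 := ht
      show z t' = 1
      rcases h0 t' with h | h
      · omega
      · exact h
    · -- degree-compatible
      intro i
      have h6 : {m ∈ O | Finsupp.degree m = i}.ncard = (Ui i).card := by
        rw [← hUiO i, Set.ncard_coe_finset]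
      show {m ∈ O | Finsupp.degree m = i}.ncard + Module.finrank K (Stmt11Aux.Wd I i) =
        Module.finrank K (homogeneousSubmodule (Fin n) K i)
      rw [h6]
      exact hfr i
  · -- InjOn
    rintro z1 ⟨h0, -⟩ z2 ⟨h0', -⟩ h
    funext m
    have hm : z1 m = 1 ↔ z2 m = 1 := by
      have := Set.ext_iff.mp h m
      simpa only [Set.mem_setOf_eq] using this
    rcases h0 m with ha | ha <;> rcases h0' m with hb | hb
    · rw [ha, hb]
    · exact absurd (hm.mpr hb) (by simp [ha])
    · exact absurd (hm.mp ha) (by simp [hb])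
    · rw [ha, hb]
  · -- SurjOn
    intro O hO
    simp only [Set.mem_setOf_eq] at hO
    obtain ⟨hfin, hdown, hdc, hbot, htop⟩ := hO
    have hsets : ∀ i : ℕ, {m ∈ O | m.sum (fun _ e => e) = i} =
        {m ∈ O | Finsupp.degree m = i} := fun i => rfl
    simp only [hsets] at hdc
    have hperdeginf := Stmt11Aux.perdeg_of_bb I hfin hdc htop
    refine ⟨fun m => if m ∈ O then (1 : ℤ) else 0, ⟨?_, ?_, ?_, ?_⟩, ?_⟩
    · intro m
      by_cases h : m ∈ O <;> simp [h]
    · intro m₁ m₂ hle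
      by_cases h2 : m₂ ∈ O
      · have h1 : m₁ ∈ O := hdown m₂ h2 m₁ hle
        simp [h1, h2]
      · by_cases h1 : m₁ ∈ O <;> simp [h1, h2]
    · -- sum condition
      intro i
      have hfinsum : (∑ᶠ m ∈ {m : Fin n →₀ ℕ | m.sum (fun _ e => e) = i},
          (if m ∈ O then (1 : ℤ) else 0)) =
          ∑ m ∈ (Stmt11Aux.finite_degSet (n := n) i).toFinset,
            (if m ∈ O then (1 : ℤ) else 0) :=
        finsum_mem_eq_finite_toFinset_sum _ (Stmt11Aux.finite_degSet i)
      rw [hfinsum, Finset.sum_boole]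
      have hset : (((Stmt11Aux.finite_degSet (n := n) i).toFinset.filter
          (fun m => m ∈ O)) : Set (Fin n →₀ ℕ)) = {m ∈ O | Finsupp.degree m = i} := by
        ext m
        simp only [Finset.coe_filter, Set.Finite.mem_toFinset, Set.mem_setOf_eq]
        exact and_comm
      have hc : ((Stmt11Aux.finite_degSet (n := n) i).toFinset.filter
          (fun m => m ∈ O)).card = {m ∈ O | Finsupp.degree m = i}.ncard := by
        rw [← Set.ncard_coe_finset, hset]
      rw [hc]
      have h12 := hdc i
      omega
    · -- inequality condition
      intro i U hU hcard
      set F := U.filter (fun m => m ∈ O) with hF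
      have hsum : ∑ m ∈ U, (if m ∈ O then (1 : ℤ) else 0) = (F.card : ℤ) := by
        rw [Finset.sum_boole]
      have hFsub : (↑F : Set (Fin n →₀ ℕ)) ⊆ {m ∈ O | Finsupp.degree m = i} := by
        intro m hm
        obtain ⟨hmU, hmO⟩ := Finset.mem_filter.mp hm
        exact ⟨hmO, hU m hmU⟩
      have hspanF_le : Submodule.span K ((fun m => (monomial m (1 : K))) '' (↑F : Set (Fin n →₀ ℕ))) ≤
          Submodule.span K ((fun m => (monomial m (1 : K))) ''
            {m ∈ O | Finsupp.degree m = i}) :=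
        Submodule.span_mono (Set.image_mono hFsub)
      have hTbot : Submodule.span K ((fun m => (monomial m (1 : K))) '' (↑F : Set (Fin n →₀ ℕ))) ⊓
          Stmt11Aux.Wd I i = ⊥ :=
        eq_bot_iff.mpr (le_trans (inf_le_inf_right _ hspanF_le) (hperdeginf i).le)
      have hUle : Submodule.span K ((fun m => (monomial m (1 : K))) '' (↑U : Set (Fin n →₀ ℕ))) ⊔
          Stmt11Aux.Wd I i ≤ homogeneousSubmodule (Fin n) K i := by
        refine sup_le ?_ (hWle i)
        rw [Stmt11Aux.span_monomial_eq, Stmt11Aux.hom_eq]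
        exact restrictSupport_mono (R := K) fun m hm => hU m hm
      have hfdU : FiniteDimensional K
          (Submodule.span K ((fun m => (monomial m (1 : K))) '' (↑U : Set (Fin n →₀ ℕ))) ⊔ Stmt11Aux.Wd I i :
            Submodule K (MvPolynomial (Fin n) K)) :=
        Submodule.finiteDimensional_of_le hUle
      have hfdF : FiniteDimensional K
          (Submodule.span K ((fun m => (monomial m (1 : K))) '' (↑F : Set (Fin n →₀ ℕ)))) :=
        Stmt11Aux.finiteDimensional_span_monomials F.finite_toSet
      have h1 : Module.finrank K
          (Submodule.span K ((fun m => (monomial m (1 : K))) '' (↑F : Set (Fin n →₀ ℕ)))) = F.card := by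
        rw [Stmt11Aux.finrank_span_monomials F.finite_toSet]
        exact Set.ncard_coe_finset F
      have h2 := Submodule.finrank_sup_add_finrank_inf_eq
        (Submodule.span K ((fun m => (monomial m (1 : K))) '' (↑F : Set (Fin n →₀ ℕ)))) (Stmt11Aux.Wd I i)
      rw [hTbot, finrank_bot] at h2
      have hsupmono : Submodule.span K ((fun m => (monomial m (1 : K))) '' (↑F : Set (Fin n →₀ ℕ))) ⊔
          Stmt11Aux.Wd I i ≤
          Submodule.span K ((fun m => (monomial m (1 : K))) '' (↑U : Set (Fin n →₀ ℕ))) ⊔ Stmt11Aux.Wd I i :=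
        sup_le_sup_right (Submodule.span_mono (Set.image_mono
          (Finset.coe_subset.mpr (Finset.filter_subset _ _)))) _
      have h3 := Submodule.finrank_mono hsupmono
      rw [hsum]
      omega
    · ext m
      simp only [Set.mem_setOf_eq]
      by_cases h : m ∈ O <;> simp [h]
end

section
/- Let I be a zero-dimensional ideal, i a degree, and O a set of degree-i monomials with |O| = dim⟨T^n_{=i}⟩ − dim(I^{≤i}/I^{≤i−1}). Then the image of O in ⟨T^n_{=i}⟩ / (I^{≤i}/I^{≤i−1}) is linearly independent if and only if for every subset U ⊆ T^n_{=i} of that same cardinality one has |U ∩ O| ≤ dim⟨U ∪ (I^{≤i}/I^{≤i−1})⟩ − dim(I^{≤i}/I^{≤i−1}). -/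
open MvPolynomial

lemma aux_finrank_12 {K V : Type*} [Field K] [AddCommGroup V] [Module K V]
    (W P : Submodule K V) [FiniteDimensional K ↥P] [FiniteDimensional K ↥W] :
    Module.finrank K ↥(Submodule.map W.mkQ P) + Module.finrank K ↥W
      = Module.finrank K ↥(P ⊔ W) := by
  let f := W.mkQ.comp (P ⊔ W).subtype
  have hr : LinearMap.range f = Submodule.map W.mkQ P := by
    rw [LinearMap.range_comp, Submodule.range_subtype, Submodule.map_sup,
      Submodule.mkQ_map_self, sup_bot_eq]
  have hk : LinearMap.ker f = Submodule.comap (P ⊔ W).subtype W := by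
    rw [LinearMap.ker_comp, Submodule.ker_mkQ]
  have h1 := LinearMap.finrank_range_add_finrank_ker f
  rw [hr, hk, (Submodule.comapSubtypeEquivOfLe (le_sup_right : W ≤ P ⊔ W)).finrank_eq] at h1
  exact h1

lemma aux_range_12 {K V : Type*} [Field K] [AddCommGroup V] [Module K V] {ι Q : Type*}
    [AddCommGroup Q] [Module K Q] (q : V →ₗ[K] Q) (mon : ι → V)
    [DecidableEq ι] (S : Finset ι) :
    Set.range (fun m : {m // m ∈ S} => q (mon m.1)) = q '' (mon '' (S : Set ι)) := by
  ext x
  constructor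
  · rintro ⟨⟨m, hm⟩, rfl⟩
    exact ⟨mon m, ⟨m, hm, rfl⟩, rfl⟩
  · rintro ⟨_, ⟨m, hm, rfl⟩, rfl⟩
    exact ⟨⟨m, hm⟩, rfl⟩

set_option maxHeartbeats 2000000 in
/-- The matroid rank inequalities of the order ideal polytope characterize
linear independence modulo the leading forms of the ideal: for a set `O` of
degree-`i` monomials of the right cardinality, the image of `O` in
`⟨T^n_{=i}⟩/(I^{≤i}/I^{≤i−1})` is linearly independent iff for every subset
`U` of degree-`i` monomials of the same cardinality,
`|U ∩ O| ≤ dim⟨U ∪ (I^{≤i}/I^{≤i−1})⟩ − dim(I^{≤i}/I^{≤i−1})`. -/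
theorem stmt_12 {K : Type*} [Field K] (n i : ℕ)
    (I : Ideal (MvPolynomial (Fin n) K))
    [FiniteDimensional K (MvPolynomial (Fin n) K ⧸ I)]
    (W : Submodule K (MvPolynomial (Fin n) K))
    (hW : W = Submodule.map (homogeneousComponent i)
      (I.restrictScalars K ⊓ restrictTotalDegree (Fin n) K i))
    (O : Finset (Fin n →₀ ℕ))
    (hOdeg : ∀ m ∈ O, m.sum (fun _ e => e) = i)
    (hOcard : O.card + Module.finrank K W =
      Module.finrank K (homogeneousSubmodule (Fin n) K i)) :
    (LinearIndependent K
        (fun m : {m // m ∈ O} => W.mkQ (monomial m.1 (1 : K)))) ↔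
      (∀ U : Finset (Fin n →₀ ℕ), (∀ m ∈ U, m.sum (fun _ e => e) = i) →
        U.card = O.card →
        (U ∩ O).card + Module.finrank K W ≤
          Module.finrank K
            ↥(Submodule.span K ((fun m => (monomial m (1 : K))) '' (U : Set (Fin n →₀ ℕ)))
              ⊔ W)) := by
  have hWfd : FiniteDimensional K ↥W := by
    rw [hW]; exact Module.Finite.map _ _
  set mon : (Fin n →₀ ℕ) → MvPolynomial (Fin n) K := fun m => monomial m (1 : K) with hmon
  have hspanfd : ∀ S : Finset (Fin n →₀ ℕ),
      FiniteDimensional K ↥(Submodule.span K (mon '' (S : Set _))) := fun S =>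
    FiniteDimensional.span_of_finite K (S.finite_toSet.image _)
  have hmap : ∀ S : Finset (Fin n →₀ ℕ),
      Submodule.span K (Set.range (fun m : {m // m ∈ S} => W.mkQ (mon m.1)))
        = Submodule.map W.mkQ (Submodule.span K (mon '' (S : Set _))) := by
    intro S
    rw [aux_range_12, Submodule.map_span]
  constructor
  · intro hli U hUdeg hUcard
    have h1 := hspanfd U
    have h2 := hspanfd (U ∩ O)
    have hsub : LinearIndependent K (fun m : {m // m ∈ U ∩ O} => W.mkQ (mon m.1)) := by
      have hinj : Function.Injective (fun m : {m // m ∈ U ∩ O} =>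
          (⟨m.1, (Finset.mem_inter.mp m.2).2⟩ : {m // m ∈ O})) := by
        intro a b hab
        simp only [Subtype.mk.injEq] at hab
        exact Subtype.ext hab
      show LinearIndependent K ((fun m : {m // m ∈ O} => W.mkQ (mon m.1)) ∘
          (fun m : {m // m ∈ U ∩ O} =>
            (⟨m.1, (Finset.mem_inter.mp m.2).2⟩ : {m // m ∈ O})))
      exact hli.comp _ hinj
    have hcard : Module.finrank K
        ↥(Submodule.span K (Set.range (fun m : {m // m ∈ U ∩ O} => W.mkQ (mon m.1))))
          = (U ∩ O).card := by
      rw [finrank_span_eq_card hsub, Fintype.card_coe]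
    rw [hmap] at hcard
    calc (U ∩ O).card + Module.finrank K ↥W
        = Module.finrank K ↥(Submodule.map W.mkQ
            (Submodule.span K (mon '' ((U ∩ O : Finset _) : Set _)))) +
          Module.finrank K ↥W := by rw [hcard]
      _ = Module.finrank K ↥(Submodule.span K (mon '' ((U ∩ O : Finset _) : Set _)) ⊔ W) :=
          aux_finrank_12 W _
      _ ≤ Module.finrank K ↥(Submodule.span K (mon '' (U : Set _)) ⊔ W) := by
          apply Submodule.finrank_mono
          apply sup_le_sup_right
          apply Submodule.span_mono
          exact Set.image_mono (by exact_mod_cast Finset.inter_subset_left)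
  · intro h
    have h0 := h O hOdeg rfl
    rw [Finset.inter_self] at h0
    have hfd := hspanfd O
    have key := aux_finrank_12 W (Submodule.span K (mon '' (O : Set _)))
    have h1 : O.card + Module.finrank K ↥W ≤
        Module.finrank K ↥(Submodule.map W.mkQ (Submodule.span K (mon '' (O : Set _)))) +
          Module.finrank K ↥W := by rw [key]; exact h0
    have h2 : O.card ≤
        Module.finrank K ↥(Submodule.map W.mkQ (Submodule.span K (mon '' (O : Set _)))) :=
      Nat.le_of_add_le_add_right h1
    rw [← hmap] at h2
    have hgoal : Fintype.card {m // m ∈ O} =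
        Set.finrank K (Set.range (fun m : {m // m ∈ O} => W.mkQ (mon m.1))) := by
      refine le_antisymm ?_ (finrank_range_le_card _)
      rw [Fintype.card_coe]
      exact h2
    exact linearIndependent_iff_card_eq_finrank_span.mpr hgoal
end

section
/- Let k, n be positive integers and let a_{ij} (i ∈ [n], j ∈ [k]) be real numbers algebraically independent over ℚ. Let I be the vanishing ideal of the k points p_j = (a_{1j},…,a_{nj}) ∈ ℝ^n. Then any k distinct monomials in x_1,…,x_n are linearly independent modulo I; equivalently, every set of k distinct monomials spans a complement of I in ℝ[x_1,…,x_n], so every order ideal of size k is a complementary order ideal of I. -/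
open MvPolynomial

section Aux

variable {n k : ℕ}

/-- The exponent finsupp corresponding to a permutation in the determinant expansion. -/
noncomputable def expE (m : Fin k → Fin n →₀ ℕ) (σ : Equiv.Perm (Fin k)) :
    (Fin n × Fin k) →₀ ℕ :=
  Finsupp.equivFunOnFinite.symm fun p => m (σ p.2) p.1

lemma expE_apply (m : Fin k → Fin n →₀ ℕ) (σ : Equiv.Perm (Fin k)) (p : Fin n × Fin k) :
    expE m σ p = m (σ p.2) p.1 := rfl

lemma expE_injective (m : Fin k → Fin n →₀ ℕ) (hm : Function.Injective m) :
    Function.Injective (expE m) := by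
  intro σ τ h
  apply Equiv.ext
  intro j
  apply hm
  ext i
  have := DFunLike.congr_fun h (i, j)
  simpa [expE_apply] using this

lemma prod_X_pow_eq (m : Fin k → Fin n →₀ ℕ) (σ : Equiv.Perm (Fin k)) :
    (∏ j : Fin k, ∏ i : Fin n,
      (X (i, j) : MvPolynomial (Fin n × Fin k) ℚ) ^ m (σ j) i)
      = monomial (expE m σ) 1 := by
  rw [monomial_eq, C_1, one_mul, Finsupp.prod_fintype _ _ (fun p => pow_zero _)]
  rw [← Finset.prod_comm]
  rw [Fintype.prod_prod_type]
  rfl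

/-- Determinant of the generic monomial matrix over ℚ is a nonzero polynomial. -/
lemma detP_ne_zero (m : Fin k → Fin n →₀ ℕ) (hm : Function.Injective m) :
    (Matrix.of fun s j : Fin k =>
      ∏ i : Fin n, (X (i, j) : MvPolynomial (Fin n × Fin k) ℚ) ^ m s i).det ≠ 0 := by
  intro h
  have hc := congrArg (coeff (expE m 1)) h
  rw [Matrix.det_apply] at hc
  simp only [Matrix.of_apply] at hc
  rw [MvPolynomial.coeff_sum] at hc
  have key : ∀ σ : Equiv.Perm (Fin k),
      coeff (expE m 1) (Equiv.Perm.sign σ •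
        ∏ j : Fin k, ∏ i : Fin n,
          (X (i, j) : MvPolynomial (Fin n × Fin k) ℚ) ^ m (σ j) i)
      = if σ = 1 then 1 else 0 := by
    intro σ
    rw [Units.smul_def, prod_X_pow_eq m σ, coeff_smul, coeff_monomial]
    by_cases hσ : σ = 1
    · simp [hσ]
    · have : expE m σ ≠ expE m 1 := fun he => hσ (expE_injective m hm he)
      simp [this, hσ]
  rw [Finset.sum_congr rfl (fun σ _ => key σ)] at hc
  simp at hc

/-- The real matrix of monomial values at the generic points has nonzero determinant. -/
lemma detM_ne_zero (a : Fin n → Fin k → ℝ)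
    (halg : AlgebraicIndependent ℚ (fun p : Fin n × Fin k => a p.1 p.2))
    (m : Fin k → Fin n →₀ ℕ) (hm : Function.Injective m) :
    (Matrix.of fun s j : Fin k => ∏ i : Fin n, a i j ^ m s i).det ≠ 0 := by
  set φ : MvPolynomial (Fin n × Fin k) ℚ →+* ℝ :=
    (aeval (R := ℚ) (fun p : Fin n × Fin k => a p.1 p.2)).toRingHom
  have hmap : (Matrix.of fun s j : Fin k => ∏ i : Fin n, a i j ^ m s i)
      = φ.mapMatrix (Matrix.of fun s j : Fin k =>
        ∏ i : Fin n, (X (i, j) : MvPolynomial (Fin n × Fin k) ℚ) ^ m s i) := by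
    ext s j
    simp [φ, RingHom.mapMatrix_apply, Matrix.map_apply]
  rw [hmap, ← RingHom.map_det]
  intro h
  have h0 : (aeval (R := ℚ) (fun p : Fin n × Fin k => a p.1 p.2))
      ((Matrix.of fun s j : Fin k =>
        ∏ i : Fin n, (X (i, j) : MvPolynomial (Fin n × Fin k) ℚ) ^ m s i).det) =
      (aeval (R := ℚ) (fun p : Fin n × Fin k => a p.1 p.2)) 0 := by
    simpa [φ] using h
  exact detP_ne_zero m hm (halg h0)

end Aux
/-- For `k` generic points (coordinates algebraically independent over `ℚ`),
any `k` distinct monomials are linearly independent modulo the vanishing ideal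
`I`; equivalently, they span a complement of `I` in `ℝ[x_1,…,x_n]`, so every
order ideal of size `k` is a complementary order ideal of `I`. -/
theorem stmt_14 (n k : ℕ) (hn : 0 < n) (hk : 0 < k)
    (a : Fin n → Fin k → ℝ)
    (halg : AlgebraicIndependent ℚ (fun p : Fin n × Fin k => a p.1 p.2))
    (I : Ideal (MvPolynomial (Fin n) ℝ))
    (hI : I = ⨅ j : Fin k,
      RingHom.ker ((aeval (fun i : Fin n => a i j)).toRingHom :
        MvPolynomial (Fin n) ℝ →+* ℝ))
    (m : Fin k → (Fin n →₀ ℕ)) (hm : Function.Injective m) :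
    (LinearIndependent ℝ
        (fun s : Fin k => Ideal.Quotient.mk I (monomial (m s) (1 : ℝ)))) ∧
      I.restrictScalars ℝ ⊓
          Submodule.span ℝ (Set.range (fun s : Fin k => monomial (m s) (1 : ℝ))) = ⊥ ∧
      I.restrictScalars ℝ ⊔
          Submodule.span ℝ (Set.range (fun s : Fin k => monomial (m s) (1 : ℝ))) = ⊤ := by
  classical
  set M : Matrix (Fin k) (Fin k) ℝ :=
    Matrix.of fun s j : Fin k => ∏ i : Fin n, a i j ^ m s i with hM
  have hdet : M.det ≠ 0 := detM_ne_zero a halg m hm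
  have hU : IsUnit M := (Matrix.isUnit_iff_isUnit_det M).mpr (isUnit_iff_ne_zero.mpr hdet)
  set ev : MvPolynomial (Fin n) ℝ →ₗ[ℝ] (Fin k → ℝ) :=
    LinearMap.pi (fun j => (aeval (fun i : Fin n => a i j)).toLinearMap) with hev
  have hmemI : ∀ f : MvPolynomial (Fin n) ℝ, f ∈ I ↔ ev f = 0 := by
    intro f
    rw [hI, Ideal.mem_iInf]
    constructor
    · intro h
      funext j
      simpa [hev] using h j
    · intro h j
      have := congrFun h j
      simpa [hev] using this
  have hev_mono : ∀ s : Fin k, ev (monomial (m s) (1 : ℝ)) = M s := by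
    intro s
    funext j
    simp only [hev, LinearMap.pi_apply, AlgHom.toLinearMap_apply, aeval_monomial, map_one,
      one_mul, hM, Matrix.of_apply]
    rw [Finsupp.prod_fintype _ _ (fun i => pow_zero _)]
  have hev_sum : ∀ c : Fin k → ℝ,
      ev (∑ s : Fin k, c s • monomial (m s) (1 : ℝ)) = Matrix.vecMul c M := by
    intro c
    rw [map_sum]
    funext j
    simp only [Finset.sum_apply, LinearMap.map_smul, Pi.smul_apply, hev_mono]
    simp [Matrix.vecMul, dotProduct, smul_eq_mul]
  have hinj : Function.Injective M.vecMul := Matrix.vecMul_injective_iff_isUnit.mpr hU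
  have hvec_zero : ∀ c : Fin k → ℝ, Matrix.vecMul c M = 0 → c = 0 := by
    intro c hc
    apply hinj
    show Matrix.vecMul c M = Matrix.vecMul 0 M
    rw [hc, Matrix.zero_vecMul]
  refine ⟨?_, ?_, ?_⟩
  · rw [Fintype.linearIndependent_iff]
    intro c hc
    have hmk : ∀ x : MvPolynomial (Fin n) ℝ,
        Ideal.Quotient.mk I x = Ideal.Quotient.mkₐ ℝ I x := fun x => rfl
    have hsum : Ideal.Quotient.mkₐ ℝ I (∑ s : Fin k, c s • monomial (m s) (1 : ℝ)) = 0 := by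
      rw [map_sum]
      simpa only [map_smul, hmk] using hc
    have hmem : (∑ s : Fin k, c s • monomial (m s) (1 : ℝ)) ∈ I := by
      rwa [Ideal.Quotient.mkₐ_eq_mk, Ideal.Quotient.eq_zero_iff_mem] at hsum
    have := hvec_zero c (by rw [← hev_sum c]; exact (hmemI _).mp hmem)
    exact fun s => congrFun this s
  · rw [eq_bot_iff]
    rintro f ⟨hfI, hfs⟩
    obtain ⟨c, hc⟩ := (Finsupp.mem_span_range_iff_exists_finsupp).mp hfs
    rw [Finsupp.sum_fintype _ _ (fun s => zero_smul ℝ (monomial (m s) (1 : ℝ)))] at hc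
    have hfI' : f ∈ I := hfI
    have hc0 : (c : Fin k → ℝ) = 0 := by
      apply hvec_zero
      rw [← hev_sum c]
      rw [hc]
      exact (hmemI f).mp hfI'
    have : f = 0 := by
      rw [← hc]
      apply Finset.sum_eq_zero
      intro s _
      rw [show c s = 0 from congrFun hc0 s, zero_smul]
    simp [this]
  · rw [eq_top_iff]
    intro f _
    obtain ⟨c, hc⟩ := (Matrix.vecMul_surjective_iff_isUnit.mpr hU) (ev f)
    set g : MvPolynomial (Fin n) ℝ := ∑ s : Fin k, c s • monomial (m s) (1 : ℝ) with hg
    have hgs : g ∈ Submodule.span ℝ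
        (Set.range (fun s : Fin k => monomial (m s) (1 : ℝ))) := by
      apply Submodule.sum_mem
      intro s _
      exact Submodule.smul_mem _ _ (Submodule.subset_span ⟨s, rfl⟩)
    have hc' : Matrix.vecMul c M = ev f := hc
    have hfg : f - g ∈ I := by
      rw [hmemI]
      rw [map_sub, hev_sum c, hc']
      simp
    refine Submodule.mem_sup.mpr ⟨f - g, hfg, g, hgs, by ring⟩
end

section
/- Let l be the smallest nonnegative integer with k ≤ C(n+l, l). Then any degree-compatible order ideal of the vanishing ideal of k generic points in n-space consists of all monomials of degree < l together with exactly k − C(n+l−1, l−1) monomials of degree l. -/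
open Module

/-- For a linearly independent finite family of functions, there exist points making
the evaluation matrix have nonzero determinant. -/
lemma fun_matrix_det {F : Type*} [Field F] {X : Type*} [Nonempty X] {r : ℕ}
    {g : Fin r → (X → F)} (hg : LinearIndependent F g) :
    ∃ x : Fin r → X, (Matrix.of fun s t : Fin r => g s (x t)).det ≠ 0 := by
  classical
  set V : Submodule F (X → F) := Submodule.span F (Set.range g) with hV
  have hfd : FiniteDimensional F V := FiniteDimensional.span_of_finite F (Set.finite_range g)
  have hrk : finrank F V = r := by
    rw [hV, finrank_span_eq_card hg, Fintype.card_fin]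
  -- step: for each j, exists j points cutting dimension to ≤ r - j
  have key : ∀ j : ℕ, ∃ c : Fin j → X,
      finrank F ↥(V ⊓ ⨅ t : Fin j, LinearMap.ker (LinearMap.proj (R := F) (φ := fun _ : X => F) (c t))) ≤ r - j := by
    intro j
    induction j with
    | zero =>
      refine ⟨Fin.elim0, ?_⟩
      rw [iInf_of_empty, inf_top_eq, hrk]
      simp
    | succ j ih =>
      obtain ⟨c, hc⟩ := ih
      set U := V ⊓ ⨅ t : Fin j, LinearMap.ker (LinearMap.proj (R := F) (φ := fun _ : X => F) (c t)) with hU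
      by_cases hbot : U = ⊥
      · obtain ⟨x0⟩ := (inferInstance : Nonempty X)
        refine ⟨Fin.cons x0 c, ?_⟩
        have hle : V ⊓ (⨅ t : Fin (j+1), LinearMap.ker (LinearMap.proj (R := F) (φ := fun _ : X => F) ((Fin.cons x0 c : Fin (j+1) → X) t))) ≤ U := by
          rw [hU]
          refine le_inf inf_le_left (le_trans inf_le_right ?_)
          refine le_iInf fun t => iInf_le_of_le t.succ ?_
          simp
        rw [le_bot_iff.mp (hle.trans hbot.le)]
        simp
      · -- pick nonzero v in U, then point where v ≠ 0
        obtain ⟨v, hvU, hv0⟩ := Submodule.exists_mem_ne_zero_of_ne_bot hbot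
        have : ∃ x0 : X, v x0 ≠ 0 := by
          by_contra h
          push_neg at h
          exact hv0 (funext h)
        obtain ⟨x0, hx0⟩ := this
        refine ⟨Fin.cons x0 c, ?_⟩
        have hUfd : FiniteDimensional F U :=
          Submodule.finiteDimensional_of_le (inf_le_left.trans_eq rfl)
        set U' := V ⊓ ⨅ t : Fin (j+1), LinearMap.ker (LinearMap.proj (R := F) (φ := fun _ : X => F) ((Fin.cons x0 c : Fin (j+1) → X) t)) with hU'
        have hlt : U' < U := by
          refine lt_of_le_of_ne ?_ ?_
          · rw [hU', hU]
            refine inf_le_inf_left _ ?_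
            refine le_iInf fun t => iInf_le_of_le t.succ ?_
            simp
          · intro he
            have hvU' : v ∈ U' := he ▸ hvU
            have := (Submodule.mem_inf.mp hvU').2
            rw [Submodule.mem_iInf] at this
            have h0 := this 0
            simp [LinearMap.mem_ker] at h0
            exact hx0 h0
        have := Submodule.finrank_lt_finrank_of_lt (t := U) hlt
        omega
  obtain ⟨x, hx⟩ := key r
  simp only [Nat.sub_self, Nat.le_zero] at hx
  have hbot : V ⊓ ⨅ t : Fin r, LinearMap.ker (LinearMap.proj (R := F) (φ := fun _ : X => F) (x t)) = ⊥ := by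
    have : FiniteDimensional F ↥(V ⊓ ⨅ t : Fin r, LinearMap.ker (LinearMap.proj (R := F) (φ := fun _ : X => F) (x t))) :=
      Submodule.finiteDimensional_of_le inf_le_left
    exact Submodule.finrank_eq_zero.mp hx
  -- the evaluation map on V is injective
  set Φ : V →ₗ[F] (Fin r → F) := LinearMap.pi (fun t => (LinearMap.proj (R := F) (φ := fun _ : X => F) (x t)).comp V.subtype) with hΦ
  have hΦinj : Function.Injective Φ := by
    rw [← LinearMap.ker_eq_bot]
    rw [Submodule.eq_bot_iff]
    rintro ⟨v, hv⟩ hker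
    have : v ∈ V ⊓ ⨅ t : Fin r, LinearMap.ker (LinearMap.proj (R := F) (φ := fun _ : X => F) (x t)) := by
      rw [Submodule.mem_inf]
      refine ⟨hv, ?_⟩
      rw [Submodule.mem_iInf]
      intro t
      have := congrFun (LinearMap.mem_ker.mp hker) t
      simpa [hΦ] using this
    rw [hbot] at this
    exact Subtype.ext (by simpa using this)
  have hΦbij : Function.Bijective Φ := by
    refine ⟨hΦinj, ?_⟩
    have := (LinearMap.injective_iff_surjective_of_finrank_eq_finrank (f := Φ) (by rw [hrk, Module.finrank_fin_fun])).mp hΦinj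
    exact this
  -- matrix of Φ w.r.t. Basis.span hg and Pi.basisFun
  set bV : Basis (Fin r) F V := Basis.span hg with hbV
  set A := LinearMap.toMatrix bV (Pi.basisFun F (Fin r)) Φ with hA
  have hAdet : A.det ≠ 0 := by
    have : IsUnit A.det := by
      let Φe := LinearEquiv.ofBijective Φ hΦbij
      have hcomp : Φ ∘ₗ (Φe.symm : (Fin r → F) →ₗ[F] V) = LinearMap.id := by
        ext y
        simp [Φe]
      have := LinearMap.toMatrix_comp (Pi.basisFun F (Fin r)) bV (Pi.basisFun F (Fin r)) Φ (Φe.symm : (Fin r → F) →ₗ[F] V)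
      rw [hcomp] at this
      rw [LinearMap.toMatrix_id] at this
      exact Matrix.isUnit_det_of_right_inverse this.symm
    exact this.ne_zero
  refine ⟨x, ?_⟩
  have hAe : (Matrix.of fun s t : Fin r => g s (x t)) = A.transpose := by
    ext s t
    rw [hA]
    rw [Matrix.transpose_apply, LinearMap.toMatrix_apply]
    simp only [hΦ, LinearMap.pi_apply, LinearMap.comp_apply, Submodule.coe_subtype, LinearMap.proj_apply, hbV]
    exact (congrFun (congrArg Subtype.val (Basis.span_apply hg s)) (x t)).symm
  rw [hAe, Matrix.det_transpose]
  exact hAdet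
open MvPolynomial Module

section
variable {n : ℕ}

/-- evaluation as a linear map into the function space -/
noncomputable def evalL (n : ℕ) : MvPolynomial (Fin n) ℚ →ₗ[ℚ] ((Fin n → ℚ) → ℚ) where
  toFun p := fun x => eval x p
  map_add' p q := by funext x; simp
  map_smul' c p := by funext x; simp [MvPolynomial.smul_eval]

lemma evalL_inj : Function.Injective (evalL n) := by
  intro p q h
  exact MvPolynomial.funext fun x => congrFun h x

/-- there exist rational points with nonzero monomial-evaluation determinant -/
lemma pts {r : ℕ} {m : Fin r → (Fin n →₀ ℕ)} (hm : Function.Injective m) :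
    ∃ b : Fin r → (Fin n → ℚ),
      (Matrix.of fun s t : Fin r => ∏ i : Fin n, (b t i) ^ (m s i)).det ≠ 0 := by
  classical
  have hmon : LinearIndependent ℚ (fun s : Fin r => (monomial (m s) (1:ℚ) : MvPolynomial (Fin n) ℚ)) := by
    have := (basisMonomials (Fin n) ℚ).linearIndependent
    have h2 := this.comp m hm
    convert h2 using 1
    funext s
    simp
    all_goals rfl
  have hg : LinearIndependent ℚ (fun s : Fin r => (evalL n) (monomial (m s) (1:ℚ))) :=
    hmon.map' (evalL n) (LinearMap.ker_eq_bot.mpr evalL_inj)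
  obtain ⟨b, hb⟩ := fun_matrix_det hg
  refine ⟨b, ?_⟩
  have hMeq : (Matrix.of fun s t : Fin r => ∏ i : Fin n, (b t i) ^ (m s i)) =
      Matrix.of fun s t : Fin r => (evalL n) (monomial (m s) (1:ℚ)) (b t) := by
    ext s t
    simp only [Matrix.of_apply, evalL, LinearMap.coe_mk, AddHom.coe_mk, eval_monomial, one_mul]
    rw [Finsupp.prod_pow]
  rw [hMeq]
  exact hb
end
open MvPolynomial Module

/-- genericity: the monomial evaluation matrix at algebraically independent points is invertible -/
lemma main_det {n k : ℕ} {a : Fin n → Fin k → ℝ}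
    (halg : AlgebraicIndependent ℚ (fun p : Fin n × Fin k => a p.1 p.2))
    {r : ℕ} {m : Fin r → (Fin n →₀ ℕ)} (hm : Function.Injective m)
    {e : Fin r → Fin k} (he : Function.Injective e) :
    (Matrix.of fun s t : Fin r => ∏ i : Fin n, (a i (e t)) ^ (m s i)).det ≠ 0 := by
  classical
  obtain ⟨b, hb⟩ := pts (n := n) hm
  -- generic matrix
  set G : Matrix (Fin r) (Fin r) (MvPolynomial (Fin n × Fin k) ℚ) :=
    Matrix.of fun s t => ∏ i : Fin n, (X (i, e t) : MvPolynomial (Fin n × Fin k) ℚ) ^ (m s i) with hG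
  -- specialization to b
  set β : Fin n × Fin k → ℚ := fun p => Function.extend e (fun t => b t p.1) (fun _ => 0) p.2 with hβ
  have hψG : ∀ s t, aeval β (G s t) = ∏ i : Fin n, (b t i) ^ (m s i) := by
    intro s t
    rw [hG]
    simp only [Matrix.of_apply, map_prod, map_pow, aeval_X]
    congr 1
    funext i
    congr 1
    simp only [hβ]
    exact he.extend_apply _ _ t
  have hGdet : G.det ≠ 0 := by
    intro h0
    apply hb
    have : (aeval β).toRingHom G.det = 0 := by rw [h0]; simp
    rw [RingHom.map_det] at this
    convert this using 2
    ext s t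
    exact (hψG s t).symm
  -- map to ℝ
  have hφ : Function.Injective (aeval (fun p : Fin n × Fin k => a p.1 p.2) :
      MvPolynomial (Fin n × Fin k) ℚ →ₐ[ℚ] ℝ) := halg
  have hφG : ∀ s t, aeval (fun p : Fin n × Fin k => a p.1 p.2) (G s t)
      = ∏ i : Fin n, (a i (e t)) ^ (m s i) := by
    intro s t
    rw [hG]
    simp
  intro h0
  apply hGdet
  apply hφ
  rw [map_zero]
  rw [show (aeval (fun p : Fin n × Fin k => a p.1 p.2)) G.det
      = ((aeval (fun p : Fin n × Fin k => a p.1 p.2)).toRingHom) G.det from rfl]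
  rw [RingHom.map_det]
  convert h0 using 2
  ext s t
  exact hφG s t
open MvPolynomial Module

section counting
variable (n : ℕ)

/-- slice sets -/
lemma card_degree_eq (i : ℕ) :
    Nat.card {d : Fin n →₀ ℕ // Finsupp.degree d = i} = (n + i - 1).choose i := by
  classical
  have e : {d : Fin n →₀ ℕ // Finsupp.degree d = i} ≃ Sym (Fin n) i := by
    refine Equiv.subtypeEquiv (Multiset.toFinsupp.symm.toEquiv) ?_ |>.trans (Equiv.refl _)
    intro d
    constructor
    · intro h
      show Multiset.card (Multiset.toFinsupp.symm d) = i
      rw [Multiset.toFinsupp_symm_apply, Finsupp.card_toMultiset]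
      exact h
    · intro h
      have : Multiset.card (Multiset.toFinsupp.symm d) = i := h
      rw [Multiset.toFinsupp_symm_apply, Finsupp.card_toMultiset] at this
      exact this
  rw [Nat.card_congr e, Nat.card_eq_fintype_card, Sym.card_sym_eq_multichoose,
    Fintype.card_fin, Nat.multichoose_eq]

lemma finite_degree_le (N : ℕ) : Finite {d : Fin n →₀ ℕ // Finsupp.degree d ≤ N} := by
  classical
  refine Finite.of_injective (fun d => (fun i => (⟨(d : Fin n →₀ ℕ) i,
    Nat.lt_succ_of_le ((Finsupp.le_degree i (d : Fin n →₀ ℕ)).trans d.2)⟩ : Fin (N+1)))) ?_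
  intro d d' h
  ext i
  exact congrArg Fin.val (congrFun h i)

lemma finite_degree_le_set (N : ℕ) : ({d : Fin n →₀ ℕ | Finsupp.degree d ≤ N}).Finite := by
  rw [← Set.finite_coe_iff]
  exact finite_degree_le n N

lemma finite_degree_eq_set (i : ℕ) : ({d : Fin n →₀ ℕ | Finsupp.degree d = i}).Finite :=
  (finite_degree_le_set n i).subset fun d hd => le_of_eq hd

lemma card_degree_le (N : ℕ) :
    Nat.card {d : Fin n →₀ ℕ // Finsupp.degree d ≤ N} = (n + N).choose N := by
  induction N with
  | zero =>
    have : {d : Fin n →₀ ℕ | Finsupp.degree d ≤ 0} = {d | Finsupp.degree d = 0} := by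
      ext d; simp [Nat.le_zero]
    rw [show {d : Fin n →₀ ℕ // Finsupp.degree d ≤ 0} = {d : Fin n →₀ ℕ // Finsupp.degree d = 0} by
      simp only [Nat.le_zero]]
    rw [card_degree_eq n 0]
    simp
  | succ N ih =>
    have hsplit : {d : Fin n →₀ ℕ | Finsupp.degree d ≤ N + 1} =
        {d | Finsupp.degree d ≤ N} ∪ {d | Finsupp.degree d = N + 1} := by
      ext d
      simp only [Set.mem_setOf_eq, Set.mem_union]
      omega
    have hdisj : Disjoint {d : Fin n →₀ ℕ | Finsupp.degree d ≤ N}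
        {d | Finsupp.degree d = N + 1} := by
      rw [Set.disjoint_left]
      intro d hd hd'
      simp only [Set.mem_setOf_eq] at hd hd'
      omega
    have h1 : Nat.card {d : Fin n →₀ ℕ // Finsupp.degree d ≤ N + 1}
        = Nat.card {d : Fin n →₀ ℕ // Finsupp.degree d ≤ N}
          + Nat.card {d : Fin n →₀ ℕ // Finsupp.degree d = N + 1} := by
      rw [show Nat.card {d : Fin n →₀ ℕ // Finsupp.degree d ≤ N + 1}
            = Set.ncard {d : Fin n →₀ ℕ | Finsupp.degree d ≤ N + 1} from
          Nat.card_coe_set_eq _,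
        show Nat.card {d : Fin n →₀ ℕ // Finsupp.degree d ≤ N}
            = Set.ncard {d : Fin n →₀ ℕ | Finsupp.degree d ≤ N} from
          Nat.card_coe_set_eq _,
        show Nat.card {d : Fin n →₀ ℕ // Finsupp.degree d = N + 1}
            = Set.ncard {d : Fin n →₀ ℕ | Finsupp.degree d = N + 1} from
          Nat.card_coe_set_eq _,
        hsplit]
      exact Set.ncard_union_eq hdisj (finite_degree_le_set n N) (finite_degree_eq_set n (N+1))
    rw [h1, ih, card_degree_eq n (N+1)]
    have : n + (N + 1) - 1 = n + N := by omega
    rw [this]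
    exact (Nat.choose_succ_succ (n + N) N).symm
end counting
open MvPolynomial Module

lemma basisRestrictSupport_coe {n : ℕ} (S : Set (Fin n →₀ ℕ)) (j : S) :
    ((MvPolynomial.basisRestrictSupport ℝ S j : restrictSupport ℝ S) : MvPolynomial (Fin n) ℝ)
      = monomial (j : Fin n →₀ ℕ) 1 := by
  classical
  have hmem : (monomial (j : Fin n →₀ ℕ) (1:ℝ)) ∈ restrictSupport ℝ S := by
    rw [mem_restrictSupport_iff, support_monomial, if_neg (one_ne_zero (α := ℝ))]
    intro x hx
    simp only [Finsupp.support_single_ne_zero _ (one_ne_zero (α := ℝ)), Finset.coe_singleton,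
      Set.mem_singleton_iff] at hx
    rw [hx]; exact j.2
  have : basisRestrictSupport ℝ S j = ⟨monomial (j : Fin n →₀ ℕ) 1, hmem⟩ := by
    rw [Basis.apply_eq_iff]
    show Finsupp.supportedEquivFinsupp S _ = _
    ext i
    show (Finsupp.single (j : Fin n →₀ ℕ) (1:ℝ)) (i : Fin n →₀ ℕ) = _
    rw [Finsupp.single_apply, Finsupp.single_apply]
    simp [Subtype.ext_iff]
  rw [this]

lemma aeval_monomial_prod {n k : ℕ} (a : Fin n → Fin k → ℝ) (j : Fin k) (d : Fin n →₀ ℕ) :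
    aeval (fun i => a i j) (monomial d (1:ℝ)) = ∏ i : Fin n, (a i j) ^ (d i) := by
  rw [aeval_monomial, _root_.map_one, one_mul, Finsupp.prod_pow]

section main
variable {n k : ℕ} {a : Fin n → Fin k → ℝ}

/-- injectivity of the evaluation on polynomials of low degree -/
lemma eval_inj (halg : AlgebraicIndependent ℚ (fun p : Fin n × Fin k => a p.1 p.2))
    {d : ℕ} (hd : (n + d).choose d ≤ k) :
    ∀ v ∈ restrictTotalDegree (Fin n) ℝ d, (∀ j, aeval (fun i => a i j) v = 0) → v = 0 := by
  classical
  intro v hv hev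
  set r := (n + d).choose d with hr
  set S : Set (Fin n →₀ ℕ) := {m | (m.sum fun _ e => e) ≤ d} with hS
  have hfin : Finite S := finite_degree_le n d
  have : Fintype S := Fintype.ofFinite _
  have hcard : Fintype.card S = r := by
    rw [← Nat.card_eq_fintype_card]
    exact card_degree_le n d
  set σ : S ≃ Fin r := Fintype.equivFinOfCardEq hcard with hσ
  set m : Fin r → (Fin n →₀ ℕ) := fun s => (σ.symm s : Fin n →₀ ℕ) with hm
  have hminj : Function.Injective m := fun s t h =>
    σ.symm.injective (Subtype.ext h)
  set e : Fin r → Fin k := Fin.castLE hd with he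
  have heinj : Function.Injective e := Fin.castLE_injective hd
  have hdet := main_det halg hminj heinj
  set M := Matrix.of fun s t : Fin r => ∏ i : Fin n, (a i (e t)) ^ (m s i) with hM
  -- basis
  set b : Basis (Fin r) ℝ (restrictTotalDegree (Fin n) ℝ d) :=
    (basisRestrictSupport ℝ S).reindex σ with hb
  have hbcoe : ∀ s : Fin r, ((b s : restrictTotalDegree (Fin n) ℝ d) : MvPolynomial (Fin n) ℝ)
      = monomial (m s) 1 := by
    intro s
    have h1 : b s = basisRestrictSupport ℝ S (σ.symm s) := by
      rw [hb]; exact (basisRestrictSupport ℝ S).reindex_apply σ s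
    rw [h1]
    exact basisRestrictSupport_coe S (σ.symm s)
  set vs : restrictTotalDegree (Fin n) ℝ d := ⟨v, hv⟩ with hvs
  set c : Fin r →₀ ℝ := b.repr vs with hc
  have hvsum : (vs : MvPolynomial (Fin n) ℝ) = ∑ s : Fin r, c s • monomial (m s) 1 := by
    conv_lhs => rw [← b.sum_repr vs]
    push_cast
    exact Finset.sum_congr rfl fun s _ => by rw [hbcoe s, hc]
  have heq : ∀ t : Fin r, M.transpose.mulVec (fun s => c s) t = 0 := by
    intro t
    have := hev (e t)
    rw [show v = (vs : MvPolynomial (Fin n) ℝ) from rfl, hvsum] at this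
    rw [map_sum] at this
    rw [Matrix.mulVec]
    simp only [Matrix.transpose_apply, dotProduct, hM, Matrix.of_apply]
    rw [← this]
    refine Finset.sum_congr rfl fun s _ => ?_
    rw [_root_.map_smul, smul_eq_mul, aeval_monomial_prod, mul_comm]
  have hc0 : (fun s => c s) = 0 := by
    have hdetT : IsUnit M.transpose.det := by
      rw [Matrix.det_transpose]
      exact isUnit_iff_ne_zero.mpr hdet
    have h1 : M.transpose.mulVec (fun s => c s) = 0 := funext heq
    calc (fun s => c s) = (1 : Matrix (Fin r) (Fin r) ℝ).mulVec (fun s => c s) := by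
            rw [Matrix.one_mulVec]
      _ = ((M.transpose)⁻¹ * M.transpose).mulVec (fun s => c s) := by rw [Matrix.nonsing_inv_mul _ hdetT]
      _ = (M.transpose)⁻¹.mulVec (M.transpose.mulVec (fun s => c s)) := by rw [Matrix.mulVec_mulVec]
      _ = 0 := by rw [h1, Matrix.mulVec_zero]
  have hcz : c = 0 := Finsupp.ext fun s => congrFun hc0 s
  have hreq : b.repr vs = b.repr 0 := by
    rw [map_zero]
    exact hcz
  have hvz : vs = 0 := b.repr.injective hreq
  exact Subtype.ext_iff.mp hvz

/-- surjectivity of the evaluation on polynomials of degree ≤ l -/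
lemma eval_surj (halg : AlgebraicIndependent ℚ (fun p : Fin n × Fin k => a p.1 p.2))
    {l : ℕ} (hl : k ≤ (n + l).choose l) (y : Fin k → ℝ) :
    ∃ v ∈ restrictTotalDegree (Fin n) ℝ l, ∀ j, aeval (fun i => a i j) v = y j := by
  classical
  set D := (n + l).choose l with hD
  set S : Set (Fin n →₀ ℕ) := {m | (m.sum fun _ e => e) ≤ l} with hS
  have hfin : Finite S := finite_degree_le n l
  have : Fintype S := Fintype.ofFinite _
  have hcard : Fintype.card S = D := by
    rw [← Nat.card_eq_fintype_card]
    exact card_degree_le n l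
  set σ : S ≃ Fin D := Fintype.equivFinOfCardEq hcard with hσ
  set m : Fin k → (Fin n →₀ ℕ) := fun s => (σ.symm (Fin.castLE hl s) : Fin n →₀ ℕ) with hm
  have hminj : Function.Injective m := fun s t h =>
    Fin.castLE_injective hl (σ.symm.injective (Subtype.ext h))
  have hdet := main_det halg hminj (Function.injective_id (α := Fin k))
  set M := Matrix.of fun s t : Fin k => ∏ i : Fin n, (a i (id t)) ^ (m s i) with hM
  have hdetT : IsUnit M.transpose.det := by
    rw [Matrix.det_transpose]
    exact isUnit_iff_ne_zero.mpr hdet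
  set c : Fin k → ℝ := (M.transpose)⁻¹.mulVec y with hcdef
  refine ⟨∑ s : Fin k, c s • monomial (m s) 1, ?_, ?_⟩
  · refine Submodule.sum_mem _ fun s _ => Submodule.smul_mem _ _ ?_
    have : m s ∈ S := (σ.symm (Fin.castLE hl s)).2
    rw [restrictTotalDegree]
    rw [mem_restrictSupport_iff, support_monomial, if_neg (one_ne_zero (α := ℝ))]
    intro x hx
    simp only [Finsupp.support_single_ne_zero _ (one_ne_zero (α := ℝ)), Finset.coe_singleton,
      Set.mem_singleton_iff] at hx
    rw [hx]; exact this
  · intro j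
    rw [map_sum]
    have : ∑ s : Fin k, (aeval (fun i => a i j)) (c s • monomial (m s) (1:ℝ))
        = M.transpose.mulVec c j := by
      rw [Matrix.mulVec]
      simp only [Matrix.transpose_apply, dotProduct, hM, Matrix.of_apply]
      refine Finset.sum_congr rfl fun s _ => ?_
      rw [_root_.map_smul, smul_eq_mul, aeval_monomial_prod, mul_comm]
      rfl
    rw [this, hcdef, Matrix.mulVec_mulVec, Matrix.mul_nonsing_inv _ hdetT, Matrix.one_mulVec]
end main
open MvPolynomial Module

lemma card_split (n N : ℕ) :
    Nat.card {d : Fin n →₀ ℕ // Finsupp.degree d ≤ N + 1}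
      = Nat.card {d : Fin n →₀ ℕ // Finsupp.degree d ≤ N}
        + Nat.card {d : Fin n →₀ ℕ // Finsupp.degree d = N + 1} := by
  classical
  have hsplit : {d : Fin n →₀ ℕ | Finsupp.degree d ≤ N + 1} =
      {d | Finsupp.degree d ≤ N} ∪ {d | Finsupp.degree d = N + 1} := by
    ext d
    simp only [Set.mem_setOf_eq, Set.mem_union]
    omega
  have hdisj : Disjoint {d : Fin n →₀ ℕ | Finsupp.degree d ≤ N}
      {d | Finsupp.degree d = N + 1} := by
    rw [Set.disjoint_left]
    intro d hd hd'
    simp only [Set.mem_setOf_eq] at hd hd'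
    omega
  rw [show Nat.card {d : Fin n →₀ ℕ // Finsupp.degree d ≤ N + 1}
        = Set.ncard {d : Fin n →₀ ℕ | Finsupp.degree d ≤ N + 1} from
      Nat.card_coe_set_eq _,
    show Nat.card {d : Fin n →₀ ℕ // Finsupp.degree d ≤ N}
        = Set.ncard {d : Fin n →₀ ℕ | Finsupp.degree d ≤ N} from
      Nat.card_coe_set_eq _,
    show Nat.card {d : Fin n →₀ ℕ // Finsupp.degree d = N + 1}
        = Set.ncard {d : Fin n →₀ ℕ | Finsupp.degree d = N + 1} from
      Nat.card_coe_set_eq _,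
    hsplit]
  exact Set.ncard_union_eq hdisj (finite_degree_le_set n N) (finite_degree_eq_set n (N+1))

lemma finrank_Vd (n N : ℕ) : Module.finrank ℝ (restrictTotalDegree (Fin n) ℝ N)
    = (n + N).choose N := by
  rw [show Module.finrank ℝ (restrictTotalDegree (Fin n) ℝ N)
      = Nat.card {d : Fin n →₀ ℕ // Finsupp.degree d ≤ N} from
    Module.finrank_eq_nat_card_basis (basisRestrictSupport ℝ _)]
  exact card_degree_le n N

lemma finrank_homog (n i : ℕ) : Module.finrank ℝ (homogeneousSubmodule (Fin n) ℝ i)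
    = Nat.card {d : Fin n →₀ ℕ // Finsupp.degree d = i} := by
  rw [homogeneousSubmodule_eq_finsupp_supported]
  exact Module.finrank_eq_nat_card_basis (basisRestrictSupport ℝ _)

set_option maxHeartbeats 2000000 in
set_option synthInstance.maxHeartbeats 1000000 in
/-- For the vanishing ideal `I` of `k` generic points in `n`-space and `l` the
smallest nonnegative integer with `k ≤ C(n+l, l)`, every degree-compatible
order ideal of `I` consists of all monomials of degree `< l` together with
exactly `k − C(n+l−1, l−1)` monomials of degree `l` (the number of monomials of
degree `< l` being `C(n+l−1, l−1) = C(n+l−1, n)`). -/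
theorem stmt_15 (n k : ℕ) (hn : 0 < n) (hk : 0 < k)
    (a : Fin n → Fin k → ℝ)
    (halg : AlgebraicIndependent ℚ (fun p : Fin n × Fin k => a p.1 p.2))
    (I : Ideal (MvPolynomial (Fin n) ℝ))
    (hI : I = ⨅ j : Fin k,
      RingHom.ker ((aeval (fun i : Fin n => a i j)).toRingHom :
        MvPolynomial (Fin n) ℝ →+* ℝ))
    (l : ℕ) (hl : k ≤ (n + l).choose l) (hlmin : ∀ l' : ℕ, l' < l → ¬ k ≤ (n + l').choose l')
    (W : ℕ → Submodule ℝ (MvPolynomial (Fin n) ℝ))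
    (hW : ∀ i : ℕ, W i = Submodule.map (homogeneousComponent i)
      (I.restrictScalars ℝ ⊓ restrictTotalDegree (Fin n) ℝ i))
    (O : Finset (Fin n →₀ ℕ))
    (hOideal : ∀ t ∈ O, ∀ t' : Fin n →₀ ℕ, (∀ i, t' i ≤ t i) → t' ∈ O)
    (hOdc : ∀ i : ℕ,
      (O.filter (fun m => m.sum (fun _ e => e) = i)).card + Module.finrank ℝ (W i) =
        Module.finrank ℝ (homogeneousSubmodule (Fin n) ℝ i)) :
    (∀ m : Fin n →₀ ℕ, m.sum (fun _ e => e) < l → m ∈ O) ∧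
      (O.filter (fun m => m.sum (fun _ e => e) = l)).card = k - (n + l - 1).choose n ∧
      (∀ m ∈ O, m.sum (fun _ e => e) ≤ l) := by
  classical
  set J : ℕ → Submodule ℝ (MvPolynomial (Fin n) ℝ) :=
    fun d => I.restrictScalars ℝ ⊓ restrictTotalDegree (Fin n) ℝ d with hJ
  have hmemI : ∀ v : MvPolynomial (Fin n) ℝ, v ∈ I.restrictScalars ℝ ↔
      ∀ j : Fin k, aeval (fun i => a i j) v = 0 := by
    intro v
    rw [Submodule.restrictScalars_mem, hI, Submodule.mem_iInf]
    exact forall_congr' fun j => RingHom.mem_ker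
  set L : MvPolynomial (Fin n) ℝ →ₗ[ℝ] (Fin k → ℝ) :=
    LinearMap.pi (fun j => (aeval (R := ℝ) (fun i => a i j)).toLinearMap) with hLdef
  have hLapp : ∀ (v) (j : Fin k), L v j = aeval (fun i => a i j) v := fun v j => rfl
  have hVmono : ∀ {d d' : ℕ}, d ≤ d' →
      restrictTotalDegree (Fin n) ℝ d ≤ restrictTotalDegree (Fin n) ℝ d' :=
    fun h => restrictSupport_mono (R := ℝ) fun m hm => le_trans hm h
  -- low degrees: trivial intersection
  have hJbot : ∀ d, (n + d).choose d < k → J d = ⊥ := by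
    intro d hd
    rw [Submodule.eq_bot_iff]
    intro v hv
    obtain ⟨hvI, hvV⟩ := Submodule.mem_inf.mp hv
    exact eval_inj halg hd.le v hvV fun j => (hmemI v).mp hvI j
  -- high degrees: rank equation
  have hJrank : ∀ d, l ≤ d → k + finrank ℝ (J d) = (n + d).choose d := by
    intro d hld
    set Φ := L ∘ₗ (restrictTotalDegree (Fin n) ℝ d).subtype with hΦ
    have hrange : LinearMap.range Φ = ⊤ := by
      rw [hΦ, LinearMap.range_comp, Submodule.range_subtype, Submodule.eq_top_iff']
      intro y
      obtain ⟨v, hvl, hvy⟩ := eval_surj halg hl y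
      refine Submodule.mem_map.mpr ⟨v, hVmono hld hvl, ?_⟩
      funext j
      rw [hLapp]
      exact hvy j
    have hker : LinearMap.ker Φ =
        Submodule.comap (restrictTotalDegree (Fin n) ℝ d).subtype (J d) := by
      ext x
      obtain ⟨v, hv⟩ := x
      simp only [LinearMap.mem_ker, Submodule.mem_comap]
      constructor
      · intro h
        refine Submodule.mem_inf.mpr ⟨?_, hv⟩
        rw [hmemI]
        intro j
        rw [← hLapp]
        show Φ ⟨v, hv⟩ j = 0
        rw [h]
        rfl
      · intro h
        obtain ⟨hvI, _⟩ := Submodule.mem_inf.mp h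
        funext j
        show L v j = 0
        rw [hLapp]
        exact (hmemI v).mp hvI j
    have hrn := LinearMap.finrank_range_add_finrank_ker Φ
    rw [hrange, hker] at hrn
    have h1 : finrank ℝ (⊤ : Submodule ℝ (Fin k → ℝ)) = k := by
      rw [finrank_top, Module.finrank_fin_fun]
    have h2 : finrank ℝ (Submodule.comap (restrictTotalDegree (Fin n) ℝ d).subtype (J d))
        = finrank ℝ (J d) :=
      (Submodule.comapSubtypeEquivOfLe (inf_le_right :
        J d ≤ restrictTotalDegree (Fin n) ℝ d)).finrank_eq
    rw [h1, h2, finrank_Vd] at hrn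
    exact hrn
  -- filtration
  have hfil0 : finrank ℝ (W 0) = finrank ℝ (J 0) := by
    haveI : FiniteDimensional ℝ (J 0) := Submodule.finiteDimensional_of_le
      (inf_le_right : J 0 ≤ restrictTotalDegree (Fin n) ℝ 0)
    set ψ := (homogeneousComponent (σ := Fin n) (R := ℝ) 0) ∘ₗ (J 0).subtype with hψ
    have hrange : LinearMap.range ψ = W 0 := by
      rw [hψ, LinearMap.range_comp, Submodule.range_subtype, hW 0]
    have hker : LinearMap.ker ψ = ⊥ := by
      rw [Submodule.eq_bot_iff]
      intro x hx
      obtain ⟨v, hv⟩ := x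
      obtain ⟨hvI, hvV⟩ := Submodule.mem_inf.mp hv
      have h0 : homogeneousComponent 0 v = 0 := hx
      refine Subtype.ext ?_
      show v = 0
      ext d
      rw [coeff_zero]
      by_cases hd : Finsupp.degree d = 0
      · have := congrArg (coeff d) h0
        rw [coeff_homogeneousComponent, if_pos hd, coeff_zero] at this
        exact this
      · refine coeff_eq_zero_of_totalDegree_lt ?_
        have hv0 : v.totalDegree ≤ 0 := (mem_restrictTotalDegree _ _ _).mp hvV
        have hdeg : Finsupp.degree d = ∑ x ∈ d.support, d x := rfl
        have : 0 < Finsupp.degree d := Nat.pos_of_ne_zero hd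
        omega
    have hrn := LinearMap.finrank_range_add_finrank_ker ψ
    rw [hrange, hker] at hrn
    simpa using hrn
  have hfil : ∀ i : ℕ, finrank ℝ (J (i+1)) = finrank ℝ (W (i+1)) + finrank ℝ (J i) := by
    intro i
    haveI : FiniteDimensional ℝ (J (i+1)) := Submodule.finiteDimensional_of_le
      (inf_le_right : J (i+1) ≤ restrictTotalDegree (Fin n) ℝ (i+1))
    set ψ := (homogeneousComponent (σ := Fin n) (R := ℝ) (i+1)) ∘ₗ (J (i+1)).subtype with hψ
    have hrange : LinearMap.range ψ = W (i+1) := by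
      rw [hψ, LinearMap.range_comp, Submodule.range_subtype, hW (i+1)]
    have hker : LinearMap.ker ψ = Submodule.comap (J (i+1)).subtype (J i) := by
      ext x
      obtain ⟨v, hv⟩ := x
      obtain ⟨hvI, hvV⟩ := Submodule.mem_inf.mp hv
      simp only [LinearMap.mem_ker, Submodule.mem_comap]
      constructor
      · intro h
        have h0 : homogeneousComponent (i+1) v = 0 := h
        refine Submodule.mem_inf.mpr ⟨hvI, ?_⟩
        rw [mem_restrictTotalDegree]
        rw [totalDegree, Finset.sup_le_iff]
        intro d hd
        have hle : (d.sum fun _ e => e) ≤ i + 1 := by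
          have := (mem_restrictTotalDegree _ _ _).mp hvV
          exact le_trans (le_totalDegree hd) this
        rcases Nat.lt_or_ge (d.sum fun _ e => e) (i+1) with hlt | hge
        · omega
        · exfalso
          have hdeq : Finsupp.degree d = i + 1 := le_antisymm hle hge
          have := congrArg (coeff d) h0
          rw [coeff_homogeneousComponent, if_pos hdeq, coeff_zero] at this
          exact (mem_support_iff.mp hd) this
      · intro h
        obtain ⟨_, hvV'⟩ := Submodule.mem_inf.mp h
        show homogeneousComponent (i+1) v = 0
        ext d
        rw [coeff_homogeneousComponent, coeff_zero]
        by_cases hd : Finsupp.degree d = i + 1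
        · rw [if_pos hd]
          refine coeff_eq_zero_of_totalDegree_lt ?_
          have hv0 : v.totalDegree ≤ i := (mem_restrictTotalDegree _ _ _).mp hvV'
          have : Finsupp.degree d = i + 1 := hd
          have hdeg : Finsupp.degree d = ∑ x ∈ d.support, d x := rfl
          show v.totalDegree < ∑ x ∈ d.support, d x
          omega
        · rw [if_neg hd]
    have hrn := LinearMap.finrank_range_add_finrank_ker ψ
    rw [hrange, hker] at hrn
    have h2 : finrank ℝ (Submodule.comap (J (i+1)).subtype (J i)) = finrank ℝ (J i) := by
      refine (Submodule.comapSubtypeEquivOfLe ?_).finrank_eq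
      exact le_inf inf_le_left (le_trans inf_le_right (hVmono (Nat.le_succ i)))
    rw [h2] at hrn
    exact hrn.symm
  -- values of finrank (W i)
  have hWlow : ∀ i, i < l → finrank ℝ (W i) = 0 := by
    intro i hi
    have hb := hJbot i (Nat.lt_of_not_le (hlmin i hi))
    rw [hW i]
    rw [show (I.restrictScalars ℝ ⊓ restrictTotalDegree (Fin n) ℝ i) = J i from rfl, hb]
    rw [Submodule.map_bot]
    exact finrank_bot ℝ _
  -- counting: cards of slices
  have hcount : ∀ i : ℕ,
      (O.filter (fun m => m.sum (fun _ e => e) = i)).card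
        = Nat.card {d : Fin n →₀ ℕ // Finsupp.degree d = i} - finrank ℝ (W i) := by
    intro i
    have := hOdc i
    rw [finrank_homog] at this
    omega
  -- Goal 1
  have goal1 : ∀ m : Fin n →₀ ℕ, (m.sum fun _ e => e) < l → m ∈ O := by
    intro m hm
    set i := (m.sum fun _ e => e) with hi
    have hcard := hOdc i
    rw [finrank_homog, hWlow i hm] at hcard
    set T : Finset (Fin n →₀ ℕ) := (finite_degree_eq_set n i).toFinset with hT
    have hsub : O.filter (fun m => m.sum (fun _ e => e) = i) ⊆ T := by
      intro x hx
      rw [hT, Set.Finite.mem_toFinset]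
      exact (Finset.mem_filter.mp hx).2
    have hTcard : T.card = Nat.card {d : Fin n →₀ ℕ // Finsupp.degree d = i} := by
      rw [show Nat.card {d : Fin n →₀ ℕ // Finsupp.degree d = i}
          = Set.ncard {d : Fin n →₀ ℕ | Finsupp.degree d = i} from Nat.card_coe_set_eq _,
        Set.ncard_eq_toFinset_card _ (finite_degree_eq_set n i)]
    have heq : O.filter (fun m => m.sum (fun _ e => e) = i) = T := by
      refine Finset.eq_of_subset_of_card_le hsub ?_
      rw [hTcard]
      omega
    have hmT : m ∈ T := by
      rw [hT, Set.Finite.mem_toFinset]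
      exact hi.symm
    rw [← heq] at hmT
    exact (Finset.mem_filter.mp hmT).1
  -- Goal 3
  have goal3 : ∀ m ∈ O, (m.sum fun _ e => e) ≤ l := by
    intro m hmO
    by_contra hgt
    push_neg at hgt
    obtain ⟨i', hii⟩ : ∃ i', (m.sum fun _ e => e) = i' + 1 :=
      ⟨(m.sum fun _ e => e) - 1, by omega⟩
    have hrk1 := hJrank (i'+1) (by omega)
    have hrk0 := hJrank i' (by omega)
    have hsum := card_split n i'
    have hle1 : Nat.card {d : Fin n →₀ ℕ // Finsupp.degree d ≤ i' + 1} = (n + (i'+1)).choose (i'+1) :=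
      card_degree_le n (i'+1)
    have hle0 : Nat.card {d : Fin n →₀ ℕ // Finsupp.degree d ≤ i'} = (n + i').choose i' :=
      card_degree_le n i'
    have hf := hfil i'
    have hOc : 0 < (O.filter (fun m => m.sum (fun _ e => e) = i' + 1)).card := by
      rw [Finset.card_pos]
      exact ⟨m, Finset.mem_filter.mpr ⟨hmO, hii⟩⟩
    have hdc := hOdc (i'+1)
    rw [finrank_homog] at hdc
    omega
  -- Goal 2
  refine ⟨goal1, ?_, goal3⟩
  rcases Nat.eq_zero_or_pos l with hl0 | hlpos
  · subst hl0
    have hrk := hJrank 0 le_rfl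
    have hdc := hOdc 0
    rw [finrank_homog] at hdc
    rw [hfil0] at hdc
    have hcard0 : Nat.card {d : Fin n →₀ ℕ // Finsupp.degree d = 0} = 1 := by
      have := card_degree_eq n 0
      simpa using this
    have hch : (n + 0).choose 0 = 1 := Nat.choose_zero_right _
    have hchoose0 : (n + 0 - 1).choose n = 0 := Nat.choose_eq_zero_of_lt (by omega)
    rw [hchoose0]
    omega
  · obtain ⟨i', rfl⟩ : ∃ i', l = i' + 1 := ⟨l - 1, by omega⟩
    have hrk := hJrank (i'+1) le_rfl
    have hb := hJbot i' (Nat.lt_of_not_le (hlmin i' (by omega)))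
    have hf := hfil i'
    rw [hb] at hf
    rw [show finrank ℝ (⊥ : Submodule ℝ (MvPolynomial (Fin n) ℝ)) = 0 from finrank_bot ℝ _] at hf
    have hsum := card_split n i'
    have hle1 : Nat.card {d : Fin n →₀ ℕ // Finsupp.degree d ≤ i' + 1} = (n + (i'+1)).choose (i'+1) :=
      card_degree_le n (i'+1)
    have hle0 : Nat.card {d : Fin n →₀ ℕ // Finsupp.degree d ≤ i'} = (n + i').choose i' :=
      card_degree_le n i'
    have hmin : (n + i').choose i' < k := Nat.lt_of_not_le (hlmin i' (by omega))
    have hdc := hOdc (i'+1)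
    rw [finrank_homog] at hdc
    have hchsymm : (n + (i'+1) - 1).choose n = (n + i').choose i' := by
      have h1 : n + (i'+1) - 1 = n + i' := by omega
      rw [h1]
      rw [← Nat.choose_symm (Nat.le_add_right n i')]
      congr 1
      omega
    rw [hchsymm]
    omega
end
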